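/- arXiv:2103.09095 — 6 statements merged into one kernel-verified Lean document; each statement's English description precedes it below -/
import Mathlib

section
/- Let λ ∈ ℝ with λ ≠ n² for every positive integer n, let h : [0,π] → ℝ be continuous, let h₁, h₂ ∈ ℝ, let f : [0,π] × ℝ → ℝ be continuous and Lipschitz with respect to its second argument (uniformly in the first), and let η₁, η₂ : C([0,π],ℝ) → ℝ be Lipschitz with respect to the supremum norm. Then there exists δ > 0 such that for every ε with |ε| < δ, the boundary value problem v''(t) + λ v(t) = h(t) + ε f(t, v(t)) for t ∈ (0,π), v(0) = h₁ + ε η₁(v), v(π) = h₂ + ε η₂(v), has exactly one twice continuously differentiable solution v on [0,π]. -/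
open Set Real

open Set Real intervalIntegral Topology Filter


theorem exists_fund (lam : ℝ) (hlam : ∀ n : ℕ, 0 < n → lam ≠ (n : ℝ) ^ 2) :
    ∃ C S : ℝ → ℝ, (∀ t, HasDerivAt C (-lam * S t) t) ∧ (∀ t, HasDerivAt S (C t) t) ∧
      C 0 = 1 ∧ S 0 = 0 ∧ (∀ t, C t ^ 2 + lam * S t ^ 2 = 1) ∧ S π ≠ 0 ∧
      C (-(π/2)) * S (π/2) - S (-(π/2)) * C (π/2) ≠ 0 := by
  rcases lt_trichotomy lam 0 with hneg | hzero | hpos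
  · set μ := Real.sqrt (-lam) with hμ
    have hμpos : 0 < μ := Real.sqrt_pos.2 (by linarith)
    have hμsq : μ ^ 2 = -lam := Real.sq_sqrt (by linarith)
    refine ⟨fun t => Real.cosh (μ * t), fun t => Real.sinh (μ * t) / μ, ?_, ?_, by simp, by simp,
      ?_, ?_, ?_⟩
    · intro t
      have hmul : HasDerivAt (fun t : ℝ => μ * t) μ t := by
        simpa using (hasDerivAt_id t).const_mul μ
      have := (Real.hasDerivAt_cosh (μ * t)).comp t hmul
      refine HasDerivAt.congr_deriv this (Eq.symm ?_)
      have hμne : μ ≠ 0 := ne_of_gt hμpos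
      show -lam * (Real.sinh (μ * t) / μ) = Real.sinh (μ * t) * μ
      rw [← hμsq]
      field_simp
    · intro t
      have hmul : HasDerivAt (fun t : ℝ => μ * t) μ t := by
        simpa using (hasDerivAt_id t).const_mul μ
      have := ((Real.hasDerivAt_sinh (μ * t)).comp t hmul).div_const μ
      refine HasDerivAt.congr_deriv this (Eq.symm ?_)
      field_simp
    · intro t
      have h1 := Real.cosh_sq_sub_sinh_sq (μ * t)
      have hμne : μ ≠ 0 := ne_of_gt hμpos
      field_simp
      nlinarith [h1, hμsq]
    · have : Real.sinh (μ * π) ≠ 0 := by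
        rw [Real.sinh_ne_zero]
        positivity
      positivity
    · have h1 : Real.sinh (μ * (π/2)) > 0 := by
        rw [show (0:ℝ) = Real.sinh 0 by simp]
        exact Real.sinh_lt_sinh.2 (by positivity)
      have h2 : Real.cosh (μ * (π/2)) > 0 := Real.cosh_pos _
      have h3 : Real.cosh (μ * -(π/2)) = Real.cosh (μ * (π/2)) := by
        rw [show μ * -(π/2) = -(μ * (π/2)) by ring, Real.cosh_neg]
      have h4 : Real.sinh (μ * -(π/2)) = -Real.sinh (μ * (π/2)) := by
        rw [show μ * -(π/2) = -(μ * (π/2)) by ring, Real.sinh_neg]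
      show Real.cosh (μ * -(π/2)) * (Real.sinh (μ * (π/2)) / μ) -
        Real.sinh (μ * -(π/2)) / μ * Real.cosh (μ * (π/2)) ≠ 0
      rw [h3, h4]
      have hμne : μ ≠ 0 := ne_of_gt hμpos
      intro hcontra
      field_simp at hcontra
      rw [show μ * (π/2) = μ * π / 2 by ring] at h1 h2
      nlinarith
  · refine ⟨fun _ => 1, fun t => t, ?_, ?_, rfl, rfl, ?_, ?_, ?_⟩
    · intro t; simpa [hzero] using (hasDerivAt_const t (1:ℝ))
    · intro t; simpa using hasDerivAt_id' t
    · intro t; simp [hzero]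
    · exact Real.pi_ne_zero
    · simp
  · set ω := Real.sqrt lam with hω
    have hωpos : 0 < ω := Real.sqrt_pos.2 hpos
    have hωsq : ω ^ 2 = lam := Real.sq_sqrt hpos.le
    have hsin : Real.sin (ω * π) ≠ 0 := by
      intro hs
      rcases Real.sin_eq_zero_iff.1 hs with ⟨n, hn⟩
      have hωn : (n : ℝ) = ω := by
        have hπ := Real.pi_ne_zero
        have := mul_right_cancel₀ hπ (by linarith [hn] : (n:ℝ) * π = ω * π)
        exact this
      have hn0 : 0 < n := by
        have : (0:ℝ) < (n:ℝ) := hωn ▸ hωpos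
        exact_mod_cast this
      refine hlam n.toNat (by omega) ?_
      rw [← hωsq, ← hωn]
      have hcast : ((n.toNat : ℕ) : ℝ) = (n : ℝ) := by
        exact_mod_cast congrArg (fun z : ℤ => (z : ℝ)) (Int.toNat_of_nonneg hn0.le)
      rw [hcast]
    refine ⟨fun t => Real.cos (ω * t), fun t => Real.sin (ω * t) / ω, ?_, ?_, by simp, by simp,
      ?_, ?_, ?_⟩
    · intro t
      have hmul : HasDerivAt (fun t : ℝ => ω * t) ω t := by
        simpa using (hasDerivAt_id t).const_mul ω
      have := (Real.hasDerivAt_cos (ω * t)).comp t hmul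
      refine HasDerivAt.congr_deriv this (Eq.symm ?_)
      have hωne : ω ≠ 0 := ne_of_gt hωpos
      show -lam * (Real.sin (ω * t) / ω) = -Real.sin (ω * t) * ω
      rw [← hωsq]
      field_simp
    · intro t
      have hmul : HasDerivAt (fun t : ℝ => ω * t) ω t := by
        simpa using (hasDerivAt_id t).const_mul ω
      have := ((Real.hasDerivAt_sin (ω * t)).comp t hmul).div_const ω
      refine HasDerivAt.congr_deriv this (Eq.symm ?_)
      field_simp
    · intro t
      have h1 := Real.sin_sq_add_cos_sq (ω * t)
      have hωne : ω ≠ 0 := ne_of_gt hωpos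
      field_simp
      nlinarith [h1, hωsq]
    · intro hS
      apply hsin
      field_simp at hS
      simpa using hS
    · intro hdet
      apply hsin
      have h2 : Real.sin (ω * π) = 2 * Real.sin (ω * (π/2)) * Real.cos (ω * (π/2)) := by
        rw [show ω * π = 2 * (ω * (π/2)) by ring, Real.sin_two_mul]
      have h3 : Real.cos (ω * -(π/2)) = Real.cos (ω * (π/2)) := by
        rw [show ω * -(π/2) = -(ω * (π/2)) by ring, Real.cos_neg]
      have h4 : Real.sin (ω * -(π/2)) = -Real.sin (ω * (π/2)) := by
        rw [show ω * -(π/2) = -(ω * (π/2)) by ring, Real.sin_neg]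
      rw [show ((fun t => Real.cos (ω * t)) (-(π/2)) * ((fun t => Real.sin (ω * t) / ω) (π/2)) -
          ((fun t => Real.sin (ω * t) / ω) (-(π/2))) * ((fun t => Real.cos (ω * t)) (π/2)))
          = Real.cos (ω * -(π/2)) * (Real.sin (ω * (π/2)) / ω) -
            Real.sin (ω * -(π/2)) / ω * Real.cos (ω * (π/2)) from rfl, h3, h4] at hdet
      have hωne : ω ≠ 0 := ne_of_gt hωpos
      field_simp at hdet
      rw [h2, show ω * (π/2) = ω * π / 2 by ring]
      linarith [hdet]


noncomputable def solW (C S g : ℝ → ℝ) (α β : ℝ) (t : ℝ) : ℝ :=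
  α * C t + β * S t + S t * (∫ s in (0:ℝ)..t, C s * g s) - C t * (∫ s in (0:ℝ)..t, S s * g s)

noncomputable def solW1 (lam : ℝ) (C S g : ℝ → ℝ) (α β : ℝ) (t : ℝ) : ℝ :=
  -lam * α * S t + β * C t + C t * (∫ s in (0:ℝ)..t, C s * g s)
    + lam * S t * (∫ s in (0:ℝ)..t, S s * g s)

section solW
variable {lam : ℝ} {C S g : ℝ → ℝ} {α β : ℝ}

lemma solW_hasDeriv1 (hC : ∀ t, HasDerivAt C (-lam * S t) t)
    (hS : ∀ t, HasDerivAt S (C t) t) (hg : Continuous g) (t : ℝ) :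
    HasDerivAt (solW C S g α β) (solW1 lam C S g α β t) t := by
  have contC : Continuous C := Differentiable.continuous fun u => (hC u).differentiableAt
  have contS : Continuous S := Differentiable.continuous fun u => (hS u).differentiableAt
  have hF : HasDerivAt (fun u => ∫ s in (0:ℝ)..u, C s * g s) (C t * g t) t :=
    ((contC.mul hg).integral_hasStrictDerivAt 0 t).hasDerivAt
  have hG : HasDerivAt (fun u => ∫ s in (0:ℝ)..u, S s * g s) (S t * g t) t :=
    ((contS.mul hg).integral_hasStrictDerivAt 0 t).hasDerivAt
  have h := ((((hC t).const_mul α).add ((hS t).const_mul β)).add ((hS t).mul hF)).sub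
    ((hC t).mul hG)
  refine HasDerivAt.congr_deriv h (Eq.symm ?_)
  simp only [solW1]
  ring

lemma solW_hasDeriv2 (hC : ∀ t, HasDerivAt C (-lam * S t) t)
    (hS : ∀ t, HasDerivAt S (C t) t) (hg : Continuous g)
    (wron : ∀ t, C t ^ 2 + lam * S t ^ 2 = 1) (t : ℝ) :
    HasDerivAt (solW1 lam C S g α β) (-lam * solW C S g α β t + g t) t := by
  have contC : Continuous C := Differentiable.continuous fun u => (hC u).differentiableAt
  have contS : Continuous S := Differentiable.continuous fun u => (hS u).differentiableAt
  have hF : HasDerivAt (fun u => ∫ s in (0:ℝ)..u, C s * g s) (C t * g t) t :=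
    ((contC.mul hg).integral_hasStrictDerivAt 0 t).hasDerivAt
  have hG : HasDerivAt (fun u => ∫ s in (0:ℝ)..u, S s * g s) (S t * g t) t :=
    ((contS.mul hg).integral_hasStrictDerivAt 0 t).hasDerivAt
  have h := ((((hS t).const_mul (-lam * α)).add ((hC t).const_mul β)).add
    ((hC t).mul hF)).add (((hS t).const_mul lam).mul hG)
  refine HasDerivAt.congr_deriv h (Eq.symm ?_)
  simp only [solW]
  linear_combination (-(g t)) * wron t

lemma solW_deriv_eq (hC : ∀ t, HasDerivAt C (-lam * S t) t)
    (hS : ∀ t, HasDerivAt S (C t) t) (hg : Continuous g) :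
    deriv (solW C S g α β) = solW1 lam C S g α β :=
  funext fun t => (solW_hasDeriv1 hC hS hg t).deriv

lemma solW_contDiff (hC : ∀ t, HasDerivAt C (-lam * S t) t)
    (hS : ∀ t, HasDerivAt S (C t) t) (hg : Continuous g)
    (wron : ∀ t, C t ^ 2 + lam * S t ^ 2 = 1) :
    ContDiff ℝ 2 (solW C S g α β) := by
  rw [show (2 : WithTop ℕ∞) = 1 + 1 from rfl, contDiff_succ_iff_deriv]
  refine ⟨fun t => (solW_hasDeriv1 hC hS hg t).differentiableAt, by simp, ?_⟩
  rw [solW_deriv_eq hC hS hg (α := α) (β := β), contDiff_one_iff_deriv]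
  have hW1 : ∀ t, HasDerivAt (solW1 lam C S g α β) (-lam * solW C S g α β t + g t) t :=
    solW_hasDeriv2 hC hS hg wron
  refine ⟨fun t => (hW1 t).differentiableAt, ?_⟩
  have : deriv (solW1 lam C S g α β) = fun t => -lam * solW C S g α β t + g t :=
    funext fun t => (hW1 t).deriv
  rw [this]
  have contW : Continuous (solW C S g α β) :=
    Differentiable.continuous fun u => (solW_hasDeriv1 hC hS hg u).differentiableAt
  exact (continuous_const.mul contW).add hg

lemma solW_deriv2_eq (hC : ∀ t, HasDerivAt C (-lam * S t) t)
    (hS : ∀ t, HasDerivAt S (C t) t) (hg : Continuous g)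
    (wron : ∀ t, C t ^ 2 + lam * S t ^ 2 = 1) (t : ℝ) :
    deriv (deriv (solW C S g α β)) t = -lam * solW C S g α β t + g t := by
  rw [solW_deriv_eq hC hS hg (α := α) (β := β)]
  exact (solW_hasDeriv2 hC hS hg wron t).deriv

lemma solW_zero (hC0 : C 0 = 1) (hS0 : S 0 = 0) : solW C S g α β 0 = α := by
  simp [solW, hC0, hS0]

end solW


lemma homog_unique {lam : ℝ} {C S : ℝ → ℝ}
    (hC : ∀ t, HasDerivAt C (-lam * S t) t) (hS : ∀ t, HasDerivAt S (C t) t)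
    (hC0 : C 0 = 1) (hS0 : S 0 = 0)
    (hdet : C (-(π/2)) * S (π/2) - S (-(π/2)) * C (π/2) ≠ 0)
    (d d' : ℝ → ℝ)
    (hd1 : ∀ t ∈ Ioo 0 π, HasDerivAt d (d' t) t)
    (hd2 : ∀ t ∈ Ioo 0 π, HasDerivAt d' (-lam * d t) t)
    (hcont : ContinuousOn d (Icc 0 π))
    (h0 : d 0 = 0) (hpi : d π = 0) :
    ∀ t ∈ Icc 0 π, d t = 0 := by
  have hπ := pi_pos
  set t₀ : ℝ := π / 2 with ht₀def
  have ht₀ : t₀ ∈ Ioo 0 π := ⟨by positivity, by linarith⟩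
  set A : ℝ := d t₀ with hA
  set B : ℝ := d' t₀ with hB
  set p : ℝ → ℝ := fun t => A * C (t - t₀) + B * S (t - t₀) with hp
  set p' : ℝ → ℝ := fun t => A * (-lam * S (t - t₀)) + B * C (t - t₀) with hp'
  have hsub : ∀ t : ℝ, HasDerivAt (fun t : ℝ => t - t₀) 1 t := fun t =>
    (hasDerivAt_id t).sub_const t₀
  have hp1 : ∀ t : ℝ, HasDerivAt p (p' t) t := by
    intro t
    have h1 := ((hC (t - t₀)).comp t (hsub t)).const_mul A
    have h2 := ((hS (t - t₀)).comp t (hsub t)).const_mul B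
    have := h1.add h2
    refine HasDerivAt.congr_deriv this (Eq.symm ?_)
    simp only [hp']; ring
  have hp2 : ∀ t : ℝ, HasDerivAt p' (-lam * p t) t := by
    intro t
    have h1 := (((hS (t - t₀)).comp t (hsub t)).const_mul (-lam)).const_mul A
    have h2 := ((hC (t - t₀)).comp t (hsub t)).const_mul B
    have := h1.add h2
    refine HasDerivAt.congr_deriv this (Eq.symm ?_)
    simp only [hp]; ring
  -- ODE uniqueness on Ioo
  have hKnn : (0:ℝ) ≤ |lam| + 1 := by positivity
  set K : NNReal := ⟨|lam| + 1, hKnn⟩ with hK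
  set v : ℝ → ℝ × ℝ → ℝ × ℝ := fun _ y => (y.2, -lam * y.1) with hv
  have hlip : ∀ t, LipschitzOnWith K (v t) (univ : Set (ℝ × ℝ)) := by
    intro t
    apply LipschitzWith.lipschitzOnWith
    apply LipschitzWith.of_dist_le_mul
    intro y z
    have hcoe : (K : ℝ) = |lam| + 1 := rfl
    rw [hcoe, Prod.dist_eq, Prod.dist_eq]
    simp only [hv, Real.dist_eq]
    have h1 : |y.2 - z.2| ≤ max |y.1 - z.1| |y.2 - z.2| := le_max_right _ _
    have h2 : |-lam * y.1 - -lam * z.1| = |lam| * |y.1 - z.1| := by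
      rw [show -lam * y.1 - -lam * z.1 = -(lam * (y.1 - z.1)) by ring, abs_neg, abs_mul]
    have h3 : |y.1 - z.1| ≤ max |y.1 - z.1| |y.2 - z.2| := le_max_left _ _
    have h4 : (0:ℝ) ≤ max |y.1 - z.1| |y.2 - z.2| :=
      le_trans (abs_nonneg _) h3
    apply max_le
    · nlinarith [abs_nonneg lam]
    · rw [h2]
      nlinarith [abs_nonneg lam]
  have heqF : EqOn (fun t => (d t, d' t)) (fun t => (p t, p' t)) (Ioo 0 π) := by
    apply ODE_solution_unique_of_mem_Ioo (fun t _ => hlip t) ht₀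
    · intro t ht
      exact ⟨(hd1 t ht).prodMk (hd2 t ht), trivial⟩
    · intro t ht
      exact ⟨(hp1 t).prodMk (hp2 t), trivial⟩
    · have : p t₀ = A ∧ p' t₀ = B := by
        constructor <;> simp [hp, hp', hC0, hS0]
      simp only [Prod.mk.injEq]
      exact ⟨(this.1).symm, (this.2).symm⟩
  have hdp : ∀ t ∈ Ioo 0 π, d t = p t := fun t ht => congrArg Prod.fst (heqF ht)
  have hpcont : Continuous p :=
    Differentiable.continuous fun t => (hp1 t).differentiableAt
  have hclosIoo : closure (Ioo (0:ℝ) π) = Icc 0 π := closure_Ioo (ne_of_lt hπ)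
  have hbound : ∀ x ∈ Icc (0:ℝ) π, d x = 0 → p x = 0 := by
    intro x hx hdx
    have hne : (𝓝[Ioo (0:ℝ) π] x).NeBot := by
      rw [← mem_closure_iff_nhdsWithin_neBot, hclosIoo]
      exact hx
    have h1 : Filter.Tendsto d (𝓝[Ioo (0:ℝ) π] x) (𝓝 (d x)) :=
      ((hcont x hx).mono Ioo_subset_Icc_self).tendsto
    have h2 : Filter.Tendsto d (𝓝[Ioo (0:ℝ) π] x) (𝓝 (p x)) := by
      apply Filter.Tendsto.congr' _ ((hpcont.tendsto x).mono_left nhdsWithin_le_nhds)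
      filter_upwards [eventually_mem_nhdsWithin] with y hy
      exact (hdp y hy).symm
    rw [← hdx]
    exact tendsto_nhds_unique h2 h1
  have e1 : A * C (-(π/2)) + B * S (-(π/2)) = 0 := by
    have := hbound 0 ⟨le_refl 0, hπ.le⟩ h0
    simpa [hp, ht₀def, show (0:ℝ) - π/2 = -(π/2) by ring] using this
  have e2 : A * C (π/2) + B * S (π/2) = 0 := by
    have := hbound π ⟨hπ.le, le_refl π⟩ hpi
    simpa [hp, ht₀def, show π - π/2 = π/2 by ring] using this
  have hA0 : A * (C (-(π/2)) * S (π/2) - S (-(π/2)) * C (π/2)) = 0 := by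
    linear_combination S (π/2) * e1 - S (-(π/2)) * e2
  have hB0 : B * (C (-(π/2)) * S (π/2) - S (-(π/2)) * C (π/2)) = 0 := by
    linear_combination C (-(π/2)) * e2 - C (π/2) * e1
  have hA' : A = 0 := by
    rcases mul_eq_zero.1 hA0 with h | h
    · exact h
    · exact absurd h hdet
  have hB' : B = 0 := by
    rcases mul_eq_zero.1 hB0 with h | h
    · exact h
    · exact absurd h hdet
  intro t ht
  rcases eq_or_lt_of_le ht.1 with h | hlt
  · rw [← h]; exact h0
  rcases eq_or_lt_of_le ht.2 with h | hlt2
  · rw [h]; exact hpi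
  rw [hdp t ⟨hlt, hlt2⟩]
  simp [hp, hA', hB']


noncomputable def gaux (h : ℝ → ℝ) (f : ℝ → ℝ → ℝ) (ε : ℝ) (u : C(Icc (0:ℝ) π, ℝ)) (s : ℝ) : ℝ :=
  h (projIcc 0 π pi_pos.le s) + ε * f (projIcc 0 π pi_pos.le s) (u (projIcc 0 π pi_pos.le s))

lemma gaux_cont (h : ℝ → ℝ) (hh : ContinuousOn h (Icc 0 π)) (f : ℝ → ℝ → ℝ)
    (hf_cont : ContinuousOn (fun p : ℝ × ℝ => f p.1 p.2) (Icc (0 : ℝ) π ×ˢ (univ : Set ℝ)))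
    (ε : ℝ) (u : C(Icc (0:ℝ) π, ℝ)) : Continuous (gaux h f ε u) := by
  have hco : Continuous fun s : ℝ => ((projIcc 0 π pi_pos.le s : Icc (0:ℝ) π) : ℝ) :=
    continuous_subtype_val.comp (continuous_projIcc)
  have h1 : Continuous fun s : ℝ => h (projIcc 0 π pi_pos.le s) :=
    hh.comp_continuous hco fun s => (projIcc 0 π pi_pos.le s).2
  have h2 : Continuous fun s : ℝ => f (projIcc 0 π pi_pos.le s) (u (projIcc 0 π pi_pos.le s)) := by
    have hcu : Continuous fun s : ℝ =>
        (((projIcc 0 π pi_pos.le s : Icc (0:ℝ) π) : ℝ), u (projIcc 0 π pi_pos.le s)) :=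
      hco.prodMk (u.continuous.comp continuous_projIcc)
    exact hf_cont.comp_continuous hcu fun s => ⟨(projIcc 0 π pi_pos.le s).2, trivial⟩
  exact h1.add (continuous_const.mul h2)

lemma gaux_eq (h : ℝ → ℝ) (f : ℝ → ℝ → ℝ) (ε : ℝ) (u : C(Icc (0:ℝ) π, ℝ)) {t : ℝ}
    (ht : t ∈ Icc (0:ℝ) π) : gaux h f ε u t = h t + ε * f t (u ⟨t, ht⟩) := by
  simp [gaux, projIcc_of_mem pi_pos.le ht]


set_option maxHeartbeats 2000000

/-- For `λ` not an eigenvalue, continuous `h`, `f` continuous and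
Lipschitz in its second argument (uniformly in the first), and `η₁, η₂` Lipschitz
functionals on `C([0,π],ℝ)`, there is `δ > 0` such that for `|ε| < δ` the boundary
value problem `v'' + λ v = h + ε f(·, v)`, `v(0) = h₁ + ε η₁(v)`, `v(π) = h₂ + ε η₂(v)`
has exactly one twice continuously differentiable solution. -/
theorem nonresonant_weakly_nonlinear_bvp_lipschitz
    (lam : ℝ) (hlam : ∀ n : ℕ, 0 < n → lam ≠ (n : ℝ) ^ 2)
    (h : ℝ → ℝ) (hh : ContinuousOn h (Icc 0 π)) (h₁ h₂ : ℝ)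
    (f : ℝ → ℝ → ℝ)
    (hf_cont : ContinuousOn (fun p : ℝ × ℝ => f p.1 p.2) (Icc (0 : ℝ) π ×ˢ (univ : Set ℝ)))
    (hf_lip : ∃ Kf : NNReal, ∀ t ∈ Icc (0 : ℝ) π, LipschitzWith Kf (f t))
    (η₁ η₂ : C(Icc (0 : ℝ) π, ℝ) → ℝ)
    (hη₁ : ∃ K₁ : NNReal, LipschitzWith K₁ η₁)
    (hη₂ : ∃ K₂ : NNReal, LipschitzWith K₂ η₂) :
    ∃ δ > 0, ∀ ε : ℝ, |ε| < δ →
      ∃ v : ℝ → ℝ, ∃ vc : C(Icc (0 : ℝ) π, ℝ),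
        -- `vc` is `v` regarded as an element of `C([0,π],ℝ)`
        (∀ t : Icc (0 : ℝ) π, vc t = v t) ∧
        -- `v` solves the boundary value problem
        (ContDiffOn ℝ 2 v (Icc 0 π) ∧
          (∀ t ∈ Ioo (0 : ℝ) π, deriv (deriv v) t + lam * v t = h t + ε * f t (v t)) ∧
          v 0 = h₁ + ε * η₁ vc ∧ v π = h₂ + ε * η₂ vc) ∧
        -- and it is the unique solution
        (∀ w : ℝ → ℝ, ∀ wc : C(Icc (0 : ℝ) π, ℝ),
          (∀ t : Icc (0 : ℝ) π, wc t = w t) →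
          ContDiffOn ℝ 2 w (Icc 0 π) →
          (∀ t ∈ Ioo (0 : ℝ) π, deriv (deriv w) t + lam * w t = h t + ε * f t (w t)) →
          w 0 = h₁ + ε * η₁ wc → w π = h₂ + ε * η₂ wc →
          EqOn w v (Icc 0 π)) := by
  obtain ⟨Kf, hKf⟩ := hf_lip
  obtain ⟨K₁, hK₁⟩ := hη₁
  obtain ⟨K₂, hK₂⟩ := hη₂
  obtain ⟨C, S, hC, hS, hC0, hS0, wron, hSπ, hdet⟩ := exists_fund lam hlam
  have contC : Continuous C := Differentiable.continuous fun u => (hC u).differentiableAt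
  have contS : Continuous S := Differentiable.continuous fun u => (hS u).differentiableAt
  obtain ⟨MC, hMCn⟩ := isCompact_Icc.exists_bound_of_continuousOn
    (contC.continuousOn (s := Icc (0:ℝ) π))
  obtain ⟨MS, hMSn⟩ := isCompact_Icc.exists_bound_of_continuousOn
    (contS.continuousOn (s := Icc (0:ℝ) π))
  have hMC' : ∀ x ∈ Icc (0:ℝ) π, |C x| ≤ MC := by
    intro x hx; simpa [Real.norm_eq_abs] using hMCn x hx
  have hMS' : ∀ x ∈ Icc (0:ℝ) π, |S x| ≤ MS := by
    intro x hx; simpa [Real.norm_eq_abs] using hMSn x hx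
  have hMC0 : 0 ≤ MC := le_trans (abs_nonneg _) (hMC' 0 ⟨le_refl 0, pi_pos.le⟩)
  have hMS0 : 0 ≤ MS := le_trans (abs_nonneg _) (hMS' 0 ⟨le_refl 0, pi_pos.le⟩)
  have hSπabs : 0 < |S π| := abs_pos.2 hSπ
  set L : ℝ := (K₁:ℝ) * MC + ((K₂:ℝ) + (K₁:ℝ) * MC + 2*MC*MS*π*(Kf:ℝ)) / |S π| * MS
      + 2*MC*MS*π*(Kf:ℝ) with hLdef
  have hL0 : 0 ≤ L := by positivity
  refine ⟨1/(L+1), by positivity, ?_⟩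
  intro ε hε
  set g : C(Icc (0:ℝ) π, ℝ) → ℝ → ℝ := fun u => gaux h f ε u with hgdef
  have hgc : ∀ u, Continuous (g u) := fun u => gaux_cont h hh f hf_cont ε u
  set alph : C(Icc (0:ℝ) π, ℝ) → ℝ := fun u => h₁ + ε * η₁ u with halph
  set bet : C(Icc (0:ℝ) π, ℝ) → ℝ :=
    fun u => (h₂ + ε * η₂ u - alph u * C π - solW C S (g u) 0 0 π) / S π with hbet
  set W : C(Icc (0:ℝ) π, ℝ) → ℝ → ℝ := fun u => solW C S (g u) (alph u) (bet u) with hWdef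
  have hWcont : ∀ u, Continuous (W u) := fun u => (solW_contDiff hC hS (hgc u) wron).continuous
  set Φ : C(Icc (0:ℝ) π, ℝ) → C(Icc (0:ℝ) π, ℝ) :=
    fun u => ⟨fun x => W u ↑x, (hWcont u).comp continuous_subtype_val⟩ with hΦdef
  -- key pointwise Lipschitz estimate
  have key : ∀ u u' : C(Icc (0:ℝ) π, ℝ), ∀ x : Icc (0:ℝ) π,
      |W u ↑x - W u' ↑x| ≤ |ε| * L * dist u u' := by
    intro u u' x
    set D := dist u u' with hD
    have hD0 : 0 ≤ D := dist_nonneg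
    have hgd : ∀ s : ℝ, |g u s - g u' s| ≤ |ε| * ((Kf:ℝ) * D) := by
      intro s
      set p := projIcc 0 π pi_pos.le s with hpdef
      have h1 : g u s - g u' s = ε * (f ↑p (u p) - f ↑p (u' p)) := by
        simp only [hgdef, gaux]; ring
      rw [h1, abs_mul]
      have h2 := (hKf ↑p p.2).dist_le_mul (u p) (u' p)
      rw [Real.dist_eq] at h2
      have h3 : dist (u p) (u' p) ≤ D := ContinuousMap.dist_apply_le_dist p
      have h4 : |f ↑p (u p) - f ↑p (u' p)| ≤ (Kf:ℝ) * D :=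
        h2.trans (mul_le_mul_of_nonneg_left h3 (NNReal.coe_nonneg Kf))
      exact mul_le_mul_of_nonneg_left h4 (abs_nonneg ε)
    have hint : ∀ (φ : ℝ → ℝ), Continuous φ → ∀ (Mφ : ℝ), (∀ y ∈ Icc (0:ℝ) π, |φ y| ≤ Mφ) →
        ∀ t ∈ Icc (0:ℝ) π,
        |(∫ s in (0:ℝ)..t, φ s * g u s) - ∫ s in (0:ℝ)..t, φ s * g u' s|
          ≤ Mφ * (|ε| * ((Kf:ℝ) * D)) * π := by
      intro φ hφc Mφ hφ t ht
      have hMφ0 : 0 ≤ Mφ := le_trans (abs_nonneg _) (hφ 0 ⟨le_refl 0, pi_pos.le⟩)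
      have hi1 : IntervalIntegrable (fun s => φ s * g u s) MeasureTheory.volume 0 t :=
        (hφc.mul (hgc u)).intervalIntegrable 0 t
      have hi2 : IntervalIntegrable (fun s => φ s * g u' s) MeasureTheory.volume 0 t :=
        (hφc.mul (hgc u')).intervalIntegrable 0 t
      rw [← intervalIntegral.integral_sub hi1 hi2]
      have hb : ∀ y ∈ Set.uIoc (0:ℝ) t, ‖φ y * g u y - φ y * g u' y‖ ≤ Mφ * (|ε| * ((Kf:ℝ) * D)) := by
        intro y hy
        have hyIcc : y ∈ Icc (0:ℝ) π := by
          rw [uIoc_of_le ht.1] at hy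
          exact ⟨hy.1.le, hy.2.trans ht.2⟩
        rw [Real.norm_eq_abs,
          show φ y * g u y - φ y * g u' y = φ y * (g u y - g u' y) by ring, abs_mul]
        exact mul_le_mul (hφ y hyIcc) (hgd y) (abs_nonneg _) hMφ0
      have hmain := intervalIntegral.norm_integral_le_of_norm_le_const hb
      rw [Real.norm_eq_abs] at hmain
      have htabs : |t - 0| ≤ π := by
        rw [sub_zero, abs_of_nonneg ht.1]; exact ht.2
      exact hmain.trans (mul_le_mul_of_nonneg_left htabs (by positivity))
    have hαd : |alph u - alph u'| ≤ |ε| * ((K₁:ℝ) * D) := by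
      have h1 : alph u - alph u' = ε * (η₁ u - η₁ u') := by simp only [halph]; ring
      rw [h1, abs_mul]
      have h2 := hK₁.dist_le_mul u u'
      rw [Real.dist_eq] at h2
      exact mul_le_mul_of_nonneg_left h2 (abs_nonneg ε)
    have hICπ := hint C contC MC hMC' π ⟨pi_pos.le, le_refl π⟩
    have hISπ := hint S contS MS hMS' π ⟨pi_pos.le, le_refl π⟩
    have hICx := hint C contC MC hMC' ↑x x.2
    have hISx := hint S contS MS hMS' ↑x x.2
    have habs3 : ∀ a b c : ℝ, |a - b - c| ≤ |a| + |b| + |c| := by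
      intro a b c
      calc |a - b - c| ≤ |a - b| + |c| := by
            rw [sub_eq_add_neg (a - b) c]
            exact (abs_add_le _ _).trans (by rw [abs_neg])
        _ ≤ |a| + |b| + |c| := by
            have : |a - b| ≤ |a| + |b| := by
              rw [sub_eq_add_neg]
              exact (abs_add_le _ _).trans (by rw [abs_neg])
            linarith
    have hβd : |bet u - bet u'| ≤ (|ε| * ((K₂:ℝ) * D) + |ε| * ((K₁:ℝ) * D) * MC
        + (MS * (MC * (|ε| * ((Kf:ℝ) * D)) * π) + MC * (MS * (|ε| * ((Kf:ℝ) * D)) * π)))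
          / |S π| := by
      have hnum : bet u - bet u' = (ε * η₂ u - ε * η₂ u' - (alph u - alph u') * C π
          - (S π * ((∫ s in (0:ℝ)..π, C s * g u s) - ∫ s in (0:ℝ)..π, C s * g u' s)
             - C π * ((∫ s in (0:ℝ)..π, S s * g u s) - ∫ s in (0:ℝ)..π, S s * g u' s)))
            / S π := by
        simp only [hbet, solW]
        field_simp
        ring
      rw [hnum, abs_div]
      rw [div_le_div_iff_of_pos_right hSπabs]
      have hX : |ε * η₂ u - ε * η₂ u'| ≤ |ε| * ((K₂:ℝ) * D) := by
        rw [show ε * η₂ u - ε * η₂ u' = ε * (η₂ u - η₂ u') by ring, abs_mul]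
        have h2 := hK₂.dist_le_mul u u'
        rw [Real.dist_eq] at h2
        exact mul_le_mul_of_nonneg_left h2 (abs_nonneg ε)
      have hY : |(alph u - alph u') * C π| ≤ |ε| * ((K₁:ℝ) * D) * MC := by
        rw [abs_mul]
        exact mul_le_mul hαd (hMC' π ⟨pi_pos.le, le_refl π⟩) (abs_nonneg _) (by positivity)
      have hZ : |S π * ((∫ s in (0:ℝ)..π, C s * g u s) - ∫ s in (0:ℝ)..π, C s * g u' s)
          - C π * ((∫ s in (0:ℝ)..π, S s * g u s) - ∫ s in (0:ℝ)..π, S s * g u' s)|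
          ≤ MS * (MC * (|ε| * ((Kf:ℝ) * D)) * π) + MC * (MS * (|ε| * ((Kf:ℝ) * D)) * π) := by
        have t1 : |S π * ((∫ s in (0:ℝ)..π, C s * g u s) - ∫ s in (0:ℝ)..π, C s * g u' s)
            - C π * ((∫ s in (0:ℝ)..π, S s * g u s) - ∫ s in (0:ℝ)..π, S s * g u' s)|
            ≤ |S π * ((∫ s in (0:ℝ)..π, C s * g u s) - ∫ s in (0:ℝ)..π, C s * g u' s)|
              + |C π * ((∫ s in (0:ℝ)..π, S s * g u s) - ∫ s in (0:ℝ)..π, S s * g u' s)| := by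
          rw [sub_eq_add_neg]
          exact (abs_add_le _ _).trans (by rw [abs_neg])
        refine t1.trans ?_
        rw [abs_mul, abs_mul]
        exact add_le_add
          (mul_le_mul (hMS' π ⟨pi_pos.le, le_refl π⟩) hICπ (abs_nonneg _) hMS0)
          (mul_le_mul (hMC' π ⟨pi_pos.le, le_refl π⟩) hISπ (abs_nonneg _) hMC0)
      exact (habs3 _ _ _).trans (by linarith)
    -- assemble pointwise bound
    have hsplit : W u ↑x - W u' ↑x = (alph u - alph u') * C ↑x + (bet u - bet u') * S ↑x
        + (S ↑x * ((∫ s in (0:ℝ)..↑x, C s * g u s) - ∫ s in (0:ℝ)..↑x, C s * g u' s)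
           - C ↑x * ((∫ s in (0:ℝ)..↑x, S s * g u s) - ∫ s in (0:ℝ)..↑x, S s * g u' s)) := by
      simp only [hWdef, solW]; ring
    rw [hsplit]
    have t0 := abs_add_three ((alph u - alph u') * C ↑x) ((bet u - bet u') * S ↑x)
      ((S ↑x * ((∫ s in (0:ℝ)..↑x, C s * g u s) - ∫ s in (0:ℝ)..↑x, C s * g u' s)
        - C ↑x * ((∫ s in (0:ℝ)..↑x, S s * g u s) - ∫ s in (0:ℝ)..↑x, S s * g u' s)))
    refine t0.trans ?_
    have s1 : |(alph u - alph u') * C ↑x| ≤ |ε| * ((K₁:ℝ) * D) * MC := by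
      rw [abs_mul]
      exact mul_le_mul hαd (hMC' ↑x x.2) (abs_nonneg _) (by positivity)
    have s2 : |(bet u - bet u') * S ↑x| ≤ (|ε| * ((K₂:ℝ) * D) + |ε| * ((K₁:ℝ) * D) * MC
        + (MS * (MC * (|ε| * ((Kf:ℝ) * D)) * π) + MC * (MS * (|ε| * ((Kf:ℝ) * D)) * π)))
          / |S π| * MS := by
      rw [abs_mul]
      refine mul_le_mul hβd (hMS' ↑x x.2) (abs_nonneg _) ?_
      positivity
    have s3 : |S ↑x * ((∫ s in (0:ℝ)..↑x, C s * g u s) - ∫ s in (0:ℝ)..↑x, C s * g u' s)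
        - C ↑x * ((∫ s in (0:ℝ)..↑x, S s * g u s) - ∫ s in (0:ℝ)..↑x, S s * g u' s)|
        ≤ MS * (MC * (|ε| * ((Kf:ℝ) * D)) * π) + MC * (MS * (|ε| * ((Kf:ℝ) * D)) * π) := by
      have t1 : |S ↑x * ((∫ s in (0:ℝ)..↑x, C s * g u s) - ∫ s in (0:ℝ)..↑x, C s * g u' s)
          - C ↑x * ((∫ s in (0:ℝ)..↑x, S s * g u s) - ∫ s in (0:ℝ)..↑x, S s * g u' s)|
          ≤ |S ↑x * ((∫ s in (0:ℝ)..↑x, C s * g u s) - ∫ s in (0:ℝ)..↑x, C s * g u' s)|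
            + |C ↑x * ((∫ s in (0:ℝ)..↑x, S s * g u s) - ∫ s in (0:ℝ)..↑x, S s * g u' s)| := by
        rw [sub_eq_add_neg]
        exact (abs_add_le _ _).trans (by rw [abs_neg])
      refine t1.trans ?_
      rw [abs_mul, abs_mul]
      exact add_le_add
        (mul_le_mul (hMS' ↑x x.2) hICx (abs_nonneg _) hMS0)
        (mul_le_mul (hMC' ↑x x.2) hISx (abs_nonneg _) hMC0)
    have hfin : |ε| * ((K₁:ℝ) * D) * MC
        + (|ε| * ((K₂:ℝ) * D) + |ε| * ((K₁:ℝ) * D) * MC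
          + (MS * (MC * (|ε| * ((Kf:ℝ) * D)) * π) + MC * (MS * (|ε| * ((Kf:ℝ) * D)) * π)))
            / |S π| * MS
        + (MS * (MC * (|ε| * ((Kf:ℝ) * D)) * π) + MC * (MS * (|ε| * ((Kf:ℝ) * D)) * π))
        = |ε| * L * D := by
      rw [hLdef]
      field_simp
      ring
    exact le_of_le_of_eq (add_le_add (add_le_add s1 s2) s3) hfin
  -- contraction
  have hΦlip : ∀ u u', dist (Φ u) (Φ u') ≤ |ε| * L * dist u u' := by
    intro u u'
    rw [ContinuousMap.dist_le (by positivity)]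
    intro x
    rw [show (Φ u) x = W u ↑x from rfl, show (Φ u') x = W u' ↑x from rfl, Real.dist_eq]
    exact key u u' x
  have hq0 : (0:ℝ) ≤ |ε| * L := by positivity
  have hΦcontr : ContractingWith (Real.toNNReal (|ε| * L)) Φ := by
    constructor
    · have hlt : ((Real.toNNReal (|ε| * L) : NNReal) : ℝ) < 1 := by
        rw [Real.coe_toNNReal _ hq0]
        calc |ε| * L ≤ |ε| * (L + 1) := by nlinarith [abs_nonneg ε]
          _ < 1 / (L + 1) * (L + 1) := by
              apply mul_lt_mul_of_pos_right hε (by positivity)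
          _ = 1 := by field_simp
      exact_mod_cast hlt
    · apply LipschitzWith.of_dist_le_mul
      intro u u'
      rw [Real.coe_toNNReal _ hq0]
      exact hΦlip u u'
  set vc : C(Icc (0:ℝ) π, ℝ) := ContractingWith.fixedPoint Φ hΦcontr with hvcdef
  have hfix : Φ vc = vc := hΦcontr.fixedPoint_isFixedPt
  have hvc_eq : ∀ x : Icc (0:ℝ) π, vc x = W vc ↑x := by
    intro x
    conv_lhs => rw [← hfix]
    rfl
  have hWpi : ∀ u, W u π = h₂ + ε * η₂ u := by
    intro u
    have hsplit : W u π = alph u * C π + bet u * S π + solW C S (g u) 0 0 π := by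
      simp only [hWdef, solW]; ring
    rw [hsplit, hbet]
    field_simp
    ring
  refine ⟨W vc, vc, hvc_eq, ⟨?_, ?_, ?_, ?_⟩, ?_⟩
  · exact (solW_contDiff hC hS (hgc vc) wron).contDiffOn
  · intro t ht
    have htI : t ∈ Icc (0:ℝ) π := Ioo_subset_Icc_self ht
    have hde : deriv (deriv (W vc)) t = -lam * W vc t + gaux h f ε vc t :=
      solW_deriv2_eq hC hS (hgc vc) wron t
    rw [hde, gaux_eq h f ε vc htI, hvc_eq ⟨t, htI⟩]
    ring
  · rw [show W vc 0 = alph vc from solW_zero hC0 hS0]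
  · exact hWpi vc
  · intro w wc hwceq hw2 hwode hw0 hwpi
    have hw2' : ContDiffOn ℝ 2 w (Ioo 0 π) := hw2.mono Ioo_subset_Icc_self
    have hwd1 : ∀ t ∈ Ioo (0:ℝ) π, HasDerivAt w (deriv w t) t := by
      intro t ht
      exact ((hw2'.differentiableOn (by norm_num)).differentiableAt
        (isOpen_Ioo.mem_nhds ht)).hasDerivAt
    have hwc1 : ContDiffOn ℝ 1 (deriv w) (Ioo 0 π) :=
      hw2'.deriv_of_isOpen isOpen_Ioo (by norm_num)
    have hwd2 : ∀ t ∈ Ioo (0:ℝ) π, HasDerivAt (deriv w) (deriv (deriv w) t) t := by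
      intro t ht
      exact ((hwc1.differentiableOn one_ne_zero).differentiableAt
        (isOpen_Ioo.mem_nhds ht)).hasDerivAt
    set d : ℝ → ℝ := fun t => w t - W wc t with hddef
    set d' : ℝ → ℝ := fun t => deriv w t - solW1 lam C S (g wc) (alph wc) (bet wc) t with hd'def
    have hd1 : ∀ t ∈ Ioo (0:ℝ) π, HasDerivAt d (d' t) t := by
      intro t ht
      exact (hwd1 t ht).sub (solW_hasDeriv1 hC hS (hgc wc) t)
    have hd2 : ∀ t ∈ Ioo (0:ℝ) π, HasDerivAt d' (-lam * d t) t := by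
      intro t ht
      have htI : t ∈ Icc (0:ℝ) π := Ioo_subset_Icc_self ht
      have hh2 := (hwd2 t ht).sub (solW_hasDeriv2 (α := alph wc) (β := bet wc) hC hS (hgc wc) wron t)
      refine HasDerivAt.congr_deriv hh2 (Eq.symm ?_)
      have hgt : g wc t = h t + ε * f t (w t) := by
        rw [show g wc t = gaux h f ε wc t from rfl, gaux_eq h f ε wc htI, hwceq ⟨t, htI⟩]
      have hww : deriv (deriv w) t = h t + ε * f t (w t) - lam * w t := by
        linarith [hwode t ht]
      rw [hww, hgt]
      simp only [hddef, hWdef]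
      ring
    have hcontd : ContinuousOn d (Icc 0 π) :=
      (hw2.continuousOn).sub ((hWcont wc).continuousOn)
    have h0d : d 0 = 0 := by
      simp only [hddef]
      rw [show W wc 0 = alph wc from solW_zero hC0 hS0, hw0]
      simp only [halph]
      ring
    have hπd : d π = 0 := by
      simp only [hddef]
      rw [hWpi wc, hwpi]
      ring
    have happly := homog_unique hC hS hC0 hS0 hdet d d' hd1 hd2 hcontd h0d hπd
    have hfixw : Φ wc = wc := by
      apply ContinuousMap.ext
      intro x
      have hzero := happly ↑x x.2
      simp only [hddef] at hzero
      have hwcx := hwceq x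
      rw [show (Φ wc) x = W wc ↑x from rfl, hwcx]
      linarith
    have hwc_vc : wc = vc := hΦcontr.fixedPoint_unique hfixw
    intro t ht
    have hzero := happly t ht
    simp only [hddef] at hzero
    rw [hwc_vc] at hzero
    linarith
end

section
/- Let λ ∈ ℝ with λ ≠ n² for every positive integer n, let h : [0,π] → ℝ be continuous, and let h₁, h₂ ∈ ℝ. Then there exists exactly one twice continuously differentiable function v : [0,π] → ℝ satisfying v''(t) + λ v(t) = h(t) for t ∈ (0,π), v(0) = h₁, and v(π) = h₂. -/
open Set Real Topology Filter

/-- Auxiliary lemma: given a fundamental system `C, S` of `u'' + lam u = 0` with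
`C 0 = 1, C' 0 = 0, S 0 = 0, S' 0 = 1` and `S π ≠ 0`, the BVP has a unique solution. -/
theorem bvp_aux (lam : ℝ) (C S Cd Sd : ℝ → ℝ)
    (hC : ∀ t, HasDerivAt C (Cd t) t) (hCd : ∀ t, HasDerivAt Cd (-lam * C t) t)
    (hS : ∀ t, HasDerivAt S (Sd t) t) (hSd : ∀ t, HasDerivAt Sd (-lam * S t) t)
    (hC0 : C 0 = 1) (hCd0 : Cd 0 = 0) (hS0 : S 0 = 0) (hSd0 : Sd 0 = 1)
    (hSpi : S π ≠ 0)
    (h : ℝ → ℝ) (hh : ContinuousOn h (Icc 0 π)) (h₁ h₂ : ℝ) :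
    ∃ v : ℝ → ℝ,
      (ContDiffOn ℝ 2 v (Icc 0 π) ∧
        (∀ t ∈ Ioo (0 : ℝ) π, deriv (deriv v) t + lam * v t = h t) ∧
        v 0 = h₁ ∧ v π = h₂) ∧
      ∀ w : ℝ → ℝ,
        (ContDiffOn ℝ 2 w (Icc 0 π) ∧
          (∀ t ∈ Ioo (0 : ℝ) π, deriv (deriv w) t + lam * w t = h t) ∧
          w 0 = h₁ ∧ w π = h₂) →
        EqOn w v (Icc 0 π) := by
  have cont_of_deriv : ∀ F F' : ℝ → ℝ, (∀ t, HasDerivAt F (F' t) t) → Continuous F :=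
    fun F F' hF => continuous_iff_continuousAt.mpr fun x => (hF x).differentiableAt.continuousAt
  -- continuity of the fundamental system
  have Ccont : Continuous C := cont_of_deriv C Cd hC
  have Scont : Continuous S := cont_of_deriv S Sd hS
  -- the Wronskian is identically 1
  have hWd : ∀ t, HasDerivAt (fun t => Sd t * C t - Cd t * S t) 0 t := by
    intro t
    have := ((hSd t).mul (hC t)).sub ((hCd t).mul (hS t))
    exact this.congr_deriv (by ring)
  have hW : ∀ t, Sd t * C t - Cd t * S t = 1 := by
    intro t
    have := is_const_of_deriv_eq_zero (f := fun t => Sd t * C t - Cd t * S t)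
      (fun x => (hWd x).differentiableAt) (fun x => (hWd x).deriv) t 0
    simpa [hSd0, hC0, hCd0, hS0] using this
  -- a continuous extension of h to all of ℝ
  set g : ℝ → ℝ := IccExtend pi_pos.le ((Icc 0 π).restrict h) with hg_def
  have gcont : Continuous g := (continuousOn_iff_continuous_restrict.mp hh).Icc_extend'
  have hg_eq : ∀ t ∈ Icc (0:ℝ) π, g t = h t := by
    intro t ht
    simp [hg_def, IccExtend_of_mem _ _ ht]
    rfl
  -- the integrals in the variation-of-constants formula
  set IC : ℝ → ℝ := fun t => ∫ s in (0:ℝ)..t, C s * g s with hIC_def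
  set IS : ℝ → ℝ := fun t => ∫ s in (0:ℝ)..t, S s * g s with hIS_def
  have hIC : ∀ t, HasDerivAt IC (C t * g t) t := fun t =>
    ((Ccont.mul gcont).integral_hasStrictDerivAt 0 t).hasDerivAt
  have hIS : ∀ t, HasDerivAt IS (S t * g t) t := fun t =>
    ((Scont.mul gcont).integral_hasStrictDerivAt 0 t).hasDerivAt
  -- the solution
  set b : ℝ := (h₂ - h₁ * C π - (S π * IC π - C π * IS π)) / S π with hb_def
  set v : ℝ → ℝ := fun t => h₁ * C t + b * S t + S t * IC t - C t * IS t with hv_def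
  set v1 : ℝ → ℝ := fun t => h₁ * Cd t + b * Sd t + Sd t * IC t - Cd t * IS t with hv1_def
  have hv : ∀ t, HasDerivAt v (v1 t) t := by
    intro t
    have key := ((((hC t).const_mul h₁).add ((hS t).const_mul b)).add
      ((hS t).mul (hIC t))).sub ((hC t).mul (hIS t))
    refine key.congr_deriv ?_
    simp only [hv1_def]
    ring
  have hv1 : ∀ t, HasDerivAt v1 (-lam * v t + g t) t := by
    intro t
    have key := ((((hCd t).const_mul h₁).add ((hSd t).const_mul b)).add
      ((hSd t).mul (hIC t))).sub ((hCd t).mul (hIS t))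
    refine key.congr_deriv ?_
    simp only [hv_def]
    linear_combination (g t) * hW t
  have vcont : Continuous v := cont_of_deriv v v1 hv
  have hdv : deriv v = v1 := funext fun t => (hv t).deriv
  have hdv1 : deriv v1 = fun t => -lam * v t + g t := funext fun t => (hv1 t).deriv
  have hv2 : ContDiff ℝ 2 v := by
    rw [show (2 : WithTop ℕ∞) = 1 + 1 from rfl, contDiff_succ_iff_deriv]
    refine ⟨fun t => (hv t).differentiableAt, by simp, ?_⟩
    rw [hdv, contDiff_one_iff_deriv, hdv1]
    exact ⟨fun t => (hv1 t).differentiableAt, (continuous_const.mul vcont).add gcont⟩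
  -- v satisfies the ODE
  have hvode : ∀ t ∈ Ioo (0:ℝ) π, deriv (deriv v) t + lam * v t = h t := by
    intro t ht
    rw [hdv, hdv1, ← hg_eq t (Ioo_subset_Icc_self ht)]
    ring
  -- boundary values
  have hIC0 : IC 0 = 0 := intervalIntegral.integral_same
  have hIS0 : IS 0 = 0 := intervalIntegral.integral_same
  have hv0 : v 0 = h₁ := by simp [hv_def, hC0, hS0, hIC0, hIS0]
  have hvpi : v π = h₂ := by
    simp only [hv_def, hb_def]
    rw [div_mul_cancel₀ _ hSpi]
    ring
  refine ⟨v, ⟨hv2.contDiffOn, hvode, hv0, hvpi⟩, ?_⟩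
  -- uniqueness
  rintro w ⟨hw, hwode, hw0, hwpi⟩
  -- facts about w at interior points
  have hwdiff : ∀ t ∈ Ioo (0:ℝ) π, DifferentiableAt ℝ w t := by
    intro t ht
    exact (hw.contDiffAt (Icc_mem_nhds ht.1 ht.2)).differentiableAt (by norm_num)
  have hwdiff2 : ∀ t ∈ Ioo (0:ℝ) π, DifferentiableAt ℝ (deriv w) t := by
    intro t ht
    have hwt : ContDiffAt ℝ 2 w t := hw.contDiffAt (Icc_mem_nhds ht.1 ht.2)
    obtain ⟨U, hU, hUcd⟩ := hwt.contDiffOn (le_refl 2) (by simp)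
    have htU : t ∈ interior U := mem_interior_iff_mem_nhds.mpr hU
    have hUo : ContDiffOn ℝ 2 w (interior U) := hUcd.mono interior_subset
    have hder : ContDiffOn ℝ 1 (deriv w) (interior U) :=
      hUo.deriv_of_isOpen isOpen_interior (by norm_num)
    exact ((hder.differentiableOn (by norm_num)) t htU).differentiableAt
      (isOpen_interior.mem_nhds htU)
  -- the two Wronskian-type invariants of u = w - v
  set A : ℝ → ℝ := fun t => (w t - v t) * Cd t - (deriv w t - v1 t) * C t with hA_def
  set B : ℝ → ℝ := fun t => (w t - v t) * Sd t - (deriv w t - v1 t) * S t with hB_def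
  have hu' : ∀ t ∈ Ioo (0:ℝ) π, HasDerivAt (fun x => w x - v x) (deriv w t - v1 t) t := by
    intro t ht
    exact ((hwdiff t ht).hasDerivAt).sub (hv t)
  have hu'' : ∀ t ∈ Ioo (0:ℝ) π,
      HasDerivAt (fun x => deriv w x - v1 x) (deriv (deriv w) t - (-lam * v t + g t)) t := by
    intro t ht
    exact ((hwdiff2 t ht).hasDerivAt).sub (hv1 t)
  have hA' : ∀ t ∈ Ioo (0:ℝ) π, HasDerivAt A 0 t := by
    intro t ht
    have key := ((hu' t ht).mul (hCd t)).sub ((hu'' t ht).mul (hC t))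
    refine key.congr_deriv ?_
    have hode := hwode t ht
    have hgt : g t = h t := hg_eq t (Ioo_subset_Icc_self ht)
    linear_combination -(C t) * hode + (C t) * hgt
  have hB' : ∀ t ∈ Ioo (0:ℝ) π, HasDerivAt B 0 t := by
    intro t ht
    have key := ((hu' t ht).mul (hSd t)).sub ((hu'' t ht).mul (hS t))
    refine key.congr_deriv ?_
    have hode := hwode t ht
    have hgt : g t = h t := hg_eq t (Ioo_subset_Icc_self ht)
    linear_combination -(S t) * hode + (S t) * hgt
  -- A and B are constant on the open interval
  have hconst : ∀ F : ℝ → ℝ, (∀ t ∈ Ioo (0:ℝ) π, HasDerivAt F 0 t) →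
      ∀ x ∈ Ioo (0:ℝ) π, ∀ y ∈ Ioo (0:ℝ) π, F x = F y := by
    intro F hF x hx y hy
    have main : ∀ x' y' : ℝ, x' ∈ Ioo (0:ℝ) π → y' ∈ Ioo (0:ℝ) π → x' ≤ y' → F y' = F x' := by
      intro x' y' hx' hy' hle
      have hsub : Icc x' y' ⊆ Ioo (0:ℝ) π := fun z hz =>
        ⟨lt_of_lt_of_le hx'.1 hz.1, lt_of_le_of_lt hz.2 hy'.2⟩
      exact constant_of_has_deriv_right_zero
        (fun z hz => ((hF z (hsub hz)).continuousAt).continuousWithinAt)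
        (fun z hz => (hF z (hsub (Ico_subset_Icc_self hz))).hasDerivWithinAt)
        y' (right_mem_Icc.mpr hle)
    rcases le_total x y with hle | hle
    · exact (main x y hx hy hle).symm
    · exact main y x hy hx hle
  have hmid : π / 2 ∈ Ioo (0:ℝ) π := ⟨by positivity, by linarith [pi_pos]⟩
  set c₁ : ℝ := A (π / 2) with hc1_def
  set c₂ : ℝ := B (π / 2) with hc2_def
  -- on the open interval, u = c₂ C - c₁ S
  have huIoo : ∀ t ∈ Ioo (0:ℝ) π, w t - v t = c₂ * C t - c₁ * S t := by
    intro t ht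
    have e1 : A t = c₁ := hconst A hA' t ht _ hmid
    have e2 : B t = c₂ := hconst B hB' t ht _ hmid
    simp only [hA_def] at e1
    simp only [hB_def] at e2
    linear_combination (C t) * e2 - (S t) * e1 - (w t - v t) * hW t
  -- extend to the endpoints by continuity
  have ucont : ContinuousOn (fun t => w t - v t) (Icc 0 π) :=
    hw.continuousOn.sub vcont.continuousOn
  have φcont : Continuous (fun t => c₂ * C t - c₁ * S t) :=
    (continuous_const.mul Ccont).sub (continuous_const.mul Scont)
  have hend : ∀ t ∈ Icc (0:ℝ) π, t ∈ closure (Ioo (0:ℝ) π) →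
      w t - v t = c₂ * C t - c₁ * S t := by
    intro t ht htc
    haveI : (𝓝[Ioo (0:ℝ) π] t).NeBot := mem_closure_iff_nhdsWithin_neBot.mp htc
    have t1 : Filter.Tendsto (fun x => w x - v x) (𝓝[Ioo (0:ℝ) π] t) (𝓝 (w t - v t)) :=
      (ucont t ht).mono_left (nhdsWithin_mono t Ioo_subset_Icc_self)
    have t2 : Filter.Tendsto (fun x => w x - v x) (𝓝[Ioo (0:ℝ) π] t)
        (𝓝 (c₂ * C t - c₁ * S t)) := by
      refine Filter.Tendsto.congr' ?_ ((φcont.tendsto t).mono_left nhdsWithin_le_nhds)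
      filter_upwards [self_mem_nhdsWithin] with x hx
      exact (huIoo x hx).symm
    exact tendsto_nhds_unique t1 t2
  have hclos : closure (Ioo (0:ℝ) π) = Icc 0 π := closure_Ioo pi_ne_zero.symm
  have hmem0 : (0:ℝ) ∈ Icc (0:ℝ) π := left_mem_Icc.mpr pi_pos.le
  have hmempi : π ∈ Icc (0:ℝ) π := right_mem_Icc.mpr pi_pos.le
  have e0 : w 0 - v 0 = c₂ * C 0 - c₁ * S 0 := hend 0 hmem0 (by rw [hclos]; exact hmem0)
  have epi : w π - v π = c₂ * C π - c₁ * S π := hend π hmempi (by rw [hclos]; exact hmempi)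
  rw [hw0, hv0, hC0, hS0] at e0
  have hc2 : c₂ = 0 := by linarith
  rw [hwpi, hvpi, hc2] at epi
  have hc1 : c₁ = 0 := by
    have hz : c₁ * S π = 0 := by linarith
    exact (mul_eq_zero.mp hz).resolve_right hSpi
  -- conclude
  intro t ht
  rcases eq_or_lt_of_le ht.1 with h0 | h0
  · rw [← h0, hw0, hv0]
  rcases eq_or_lt_of_le ht.2 with hpi | hpi
  · rw [hpi, hwpi, hvpi]
  have := huIoo t ⟨h0, hpi⟩
  rw [hc1, hc2] at this
  linarith

/-- For `λ` not an eigenvalue (`λ ≠ n²` for every positive integer `n`),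
the linear boundary value problem `v'' + λ v = h` on `(0, π)` with `v(0) = h₁`, `v(π) = h₂`
has exactly one twice continuously differentiable solution on `[0, π]`. -/
theorem linear_bvp_existence_uniqueness_nonresonant
    (lam : ℝ) (hlam : ∀ n : ℕ, 0 < n → lam ≠ (n : ℝ) ^ 2)
    (h : ℝ → ℝ) (hh : ContinuousOn h (Icc 0 π)) (h₁ h₂ : ℝ) :
    ∃ v : ℝ → ℝ,
      (ContDiffOn ℝ 2 v (Icc 0 π) ∧
        (∀ t ∈ Ioo (0 : ℝ) π, deriv (deriv v) t + lam * v t = h t) ∧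
        v 0 = h₁ ∧ v π = h₂) ∧
      ∀ w : ℝ → ℝ,
        (ContDiffOn ℝ 2 w (Icc 0 π) ∧
          (∀ t ∈ Ioo (0 : ℝ) π, deriv (deriv w) t + lam * w t = h t) ∧
          w 0 = h₁ ∧ w π = h₂) →
        EqOn w v (Icc 0 π) := by
  rcases lt_trichotomy lam 0 with hneg | hzero | hpos
  · -- lam < 0 : hyperbolic fundamental system
    set ω : ℝ := Real.sqrt (-lam) with hω_def
    have hω2 : ω ^ 2 = -lam := Real.sq_sqrt (by linarith)
    have hωpos : 0 < ω := Real.sqrt_pos.mpr (by linarith)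
    have hlam2 : lam = -(ω ^ 2) := by linarith
    have hlin : ∀ t : ℝ, HasDerivAt (fun x : ℝ => ω * x) ω t := fun t => by
      simpa using (hasDerivAt_id t).const_mul ω
    refine bvp_aux lam (fun t => Real.cosh (ω * t)) (fun t => Real.sinh (ω * t) / ω)
      (fun t => ω * Real.sinh (ω * t)) (fun t => Real.cosh (ω * t))
      (fun t => ?_) (fun t => ?_) (fun t => ?_) (fun t => ?_)
      (by simp) (by simp) (by simp) (by simp) ?_ h hh h₁ h₂
    · have key := (hlin t).cosh
      exact key.congr_deriv (by ring)
    · have key := ((hlin t).sinh).const_mul ω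
      exact key.congr_deriv (by rw [hlam2]; ring)
    · have key := ((hlin t).sinh).div_const ω
      exact key.congr_deriv (mul_div_cancel_right₀ _ hωpos.ne')
    · have key := (hlin t).cosh
      exact key.congr_deriv (by rw [hlam2]; field_simp)
    · have hpos' : 0 < Real.sinh (ω * π) := Real.sinh_pos_iff.mpr (by positivity)
      positivity
  · -- lam = 0
    subst hzero
    refine bvp_aux 0 (fun _ => 1) (fun t => t) (fun _ => 0) (fun _ => 1)
      (fun t => hasDerivAt_const t 1) (fun t => by simpa using hasDerivAt_const t (0:ℝ))
      (fun t => hasDerivAt_id' t) (fun t => by simpa using hasDerivAt_const t (1:ℝ))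
      rfl rfl rfl rfl pi_ne_zero h hh h₁ h₂
  · -- lam > 0 : trigonometric fundamental system
    set ω : ℝ := Real.sqrt lam with hω_def
    have hω2 : ω ^ 2 = lam := Real.sq_sqrt hpos.le
    have hωpos : 0 < ω := Real.sqrt_pos.mpr hpos
    have hlin : ∀ t : ℝ, HasDerivAt (fun x : ℝ => ω * x) ω t := fun t => by
      simpa using (hasDerivAt_id t).const_mul ω
    refine bvp_aux lam (fun t => Real.cos (ω * t)) (fun t => Real.sin (ω * t) / ω)
      (fun t => -(ω * Real.sin (ω * t))) (fun t => Real.cos (ω * t))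
      (fun t => ?_) (fun t => ?_) (fun t => ?_) (fun t => ?_)
      (by simp) (by simp) (by simp) (by simp) ?_ h hh h₁ h₂
    · have key := (hlin t).cos
      exact key.congr_deriv (by ring)
    · have key := (((hlin t).sin).const_mul ω).neg
      exact key.congr_deriv (by rw [← hω2]; ring)
    · have key := ((hlin t).sin).div_const ω
      exact key.congr_deriv (mul_div_cancel_right₀ _ hωpos.ne')
    · have key := (hlin t).cos
      exact key.congr_deriv (by rw [← hω2]; field_simp)
    · -- sin (ω π) / ω ≠ 0
      intro hcontra
      have hsin : Real.sin (ω * π) = 0 := by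
        field_simp at hcontra
        simpa using hcontra
      obtain ⟨n, hn⟩ := Real.sin_eq_zero_iff.mp hsin
      have hωn : (n : ℝ) = ω := mul_right_cancel₀ pi_ne_zero hn
      have hnpos : 0 < n := by
        by_contra hle
        push_neg at hle
        have : (n : ℝ) ≤ 0 := by exact_mod_cast hle
        linarith
      have hcast : ((n.toNat : ℕ) : ℝ) = (n : ℝ) := by
        exact_mod_cast congrArg (fun k : ℤ => (k : ℝ)) (Int.toNat_of_nonneg hnpos.le)
      refine hlam n.toNat (by omega) ?_
      rw [hcast, hωn, hω2]
end

section
/- Let n be a positive integer, let h : [0,π] → ℝ be continuous, and let h₁, h₂ ∈ ℝ. There exists a twice continuously differentiable function v : [0,π] → ℝ satisfying v''(t) + n² v(t) = h(t) for t ∈ (0,π), v(0) = h₁, and v(π) = h₂ if and only if n·(h₁ + (−1)^{n+1} h₂) = ∫₀^π sin(n t) h(t) dt. -/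
open Set Real

private lemma ftc_deriv (f : ℝ → ℝ) (hf : Continuous f) (t : ℝ) :
    HasDerivAt (fun u => ∫ s in (0:ℝ)..u, f s) (f t) t :=
  intervalIntegral.integral_hasDerivAt_right (hf.intervalIntegrable 0 t)
    (hf.stronglyMeasurableAtFilter _ _) hf.continuousAt

private lemma cos_nat_pi' (n : ℕ) : Real.cos (n * π) = (-1) ^ n := by
  simpa using Real.cos_nat_mul_pi_sub 0 n

private lemma hasDerivAt_sin_mul (n : ℕ) (t : ℝ) :
    HasDerivAt (fun t : ℝ => Real.sin (n * t)) ((n : ℝ) * Real.cos (n * t)) t := by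
  simpa [Function.comp_def, mul_comm] using
    (Real.hasDerivAt_sin ((n : ℝ) * t)).comp t ((hasDerivAt_id t).const_mul (n : ℝ))

private lemma hasDerivAt_cos_mul (n : ℕ) (t : ℝ) :
    HasDerivAt (fun t : ℝ => Real.cos (n * t)) (-((n : ℝ) * Real.sin (n * t))) t := by
  simpa [Function.comp_def, mul_comm] using
    (Real.hasDerivAt_cos ((n : ℝ) * t)).comp t ((hasDerivAt_id t).const_mul (n : ℝ))

private lemma bvp_construct (n : ℕ) (hn : 0 < n) (H : ℝ → ℝ) (hH : Continuous H) (h₁ : ℝ) :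
    ∃ v : ℝ → ℝ, ContDiff ℝ 2 v ∧
      (∀ t, deriv (deriv v) t + (n : ℝ) ^ 2 * v t = H t) ∧
      v 0 = h₁ ∧
      v π = (-1 : ℝ) ^ n * h₁
        - ((-1 : ℝ) ^ n / n) * ∫ s in (0:ℝ)..π, Real.sin (n * s) * H s := by
  have hn' : (n : ℝ) ≠ 0 := Nat.cast_ne_zero.mpr hn.ne'
  set A : ℝ → ℝ := fun t => ∫ s in (0:ℝ)..t, Real.cos (n * s) * H s with hAdef
  set B : ℝ → ℝ := fun t => ∫ s in (0:ℝ)..t, Real.sin (n * s) * H s with hBdef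
  have hcA : Continuous fun s : ℝ => Real.cos (n * s) * H s := by fun_prop
  have hcB : Continuous fun s : ℝ => Real.sin (n * s) * H s := by fun_prop
  have hA' : ∀ t, HasDerivAt A (Real.cos (n * t) * H t) t := fun t => ftc_deriv _ hcA t
  have hB' : ∀ t, HasDerivAt B (Real.sin (n * t) * H t) t := fun t => ftc_deriv _ hcB t
  set v : ℝ → ℝ := fun t => h₁ * Real.cos (n * t)
      + (1 / n) * (Real.sin (n * t) * A t - Real.cos (n * t) * B t) with hvdef
  set v1 : ℝ → ℝ := fun t => -(n : ℝ) * h₁ * Real.sin (n * t)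
      + Real.cos (n * t) * A t + Real.sin (n * t) * B t with hv1def
  have pyth : ∀ t : ℝ, Real.sin (n * t) ^ 2 + Real.cos (n * t) ^ 2 = 1 :=
    fun t => Real.sin_sq_add_cos_sq _
  have hv1 : ∀ t, HasDerivAt v (v1 t) t := by
    intro t
    have hd := ((hasDerivAt_cos_mul n t).const_mul h₁).add
      ((((hasDerivAt_sin_mul n t).mul (hA' t)).sub
        ((hasDerivAt_cos_mul n t).mul (hB' t))).const_mul ((1 : ℝ) / n))
    refine HasDerivAt.congr_deriv hd ?_
    field_simp
    ring
  have hv2 : ∀ t, HasDerivAt v1 (-(n : ℝ) ^ 2 * v t + H t) t := by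
    intro t
    have hd := (((hasDerivAt_sin_mul n t).const_mul (-(n : ℝ) * h₁)).add
        ((hasDerivAt_cos_mul n t).mul (hA' t))).add
      ((hasDerivAt_sin_mul n t).mul (hB' t))
    refine HasDerivAt.congr_deriv hd ?_
    have p := pyth t
    simp only [hvdef]
    field_simp
    linear_combination (H t) * p
  have hdv : deriv v = v1 := funext fun t => (hv1 t).deriv
  have hdv1 : ∀ t, deriv v1 t = -(n : ℝ) ^ 2 * v t + H t := fun t => (hv2 t).deriv
  refine ⟨v, ?_, ?_, ?_, ?_⟩
  · rw [show (2 : WithTop ℕ∞) = 1 + 1 from rfl, contDiff_succ_iff_deriv]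
    refine ⟨fun t => (hv1 t).differentiableAt, by simp, ?_⟩
    rw [hdv, contDiff_one_iff_deriv]
    refine ⟨fun t => (hv2 t).differentiableAt, ?_⟩
    have : deriv v1 = fun t => -(n : ℝ) ^ 2 * v t + H t := funext hdv1
    rw [this]
    have hvd : Differentiable ℝ v := fun t => (hv1 t).differentiableAt
    have hvc : Continuous v := hvd.continuous
    fun_prop
  · intro t
    rw [hdv, hdv1 t]
    ring
  · simp [hvdef, hAdef, hBdef, intervalIntegral.integral_same]
  · have hs : Real.sin ((n : ℝ) * π) = 0 := Real.sin_nat_mul_pi n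
    have hc : Real.cos ((n : ℝ) * π) = (-1) ^ n := cos_nat_pi' n
    simp only [hvdef, hs, hc, hBdef]
    ring


/-- Solvability of the resonant linear boundary value problem
`v'' + n² v = h` on `(0,π)`, `v(0) = h₁`, `v(π) = h₂`:
a solution exists iff `n (h₁ + (−1)^{n+1} h₂) = ∫₀^π sin(nt) h(t) dt`. -/
theorem resonant_linear_bvp_solvability (n : ℕ) (hn : 0 < n)
    (h : ℝ → ℝ) (hh : ContinuousOn h (Icc 0 π)) (h₁ h₂ : ℝ) :
    (∃ v : ℝ → ℝ,
        ContDiffOn ℝ 2 v (Icc 0 π) ∧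
        (∀ t ∈ Ioo (0 : ℝ) π, deriv (deriv v) t + (n : ℝ) ^ 2 * v t = h t) ∧
        v 0 = h₁ ∧ v π = h₂) ↔
      (n : ℝ) * (h₁ + (-1 : ℝ) ^ (n + 1) * h₂) = ∫ t in (0 : ℝ)..π, Real.sin (n * t) * h t := by
  have hn' : (n : ℝ) ≠ 0 := Nat.cast_ne_zero.mpr hn.ne'
  have hpow : (-1 : ℝ) ^ n * (-1 : ℝ) ^ n = 1 := by
    rw [← mul_pow]; norm_num
  constructor
  · rintro ⟨v, hv, hode, hv0, hvπ⟩
    have hud : UniqueDiffOn ℝ (Icc (0:ℝ) π) := uniqueDiffOn_Icc pi_pos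
    set w : ℝ → ℝ := derivWithin v (Icc 0 π) with hwdef
    have hw1 : ContDiffOn ℝ 1 w (Icc 0 π) := hv.derivWithin hud (by norm_num)
    have hwc : ContinuousOn w (Icc 0 π) := hw1.continuousOn
    have hvc : ContinuousOn v (Icc 0 π) := hv.continuousOn
    set g : ℝ → ℝ := fun t => Real.sin (n * t) * w t - (n : ℝ) * Real.cos (n * t) * v t
      with hgdef
    have hgc : ContinuousOn g (Icc 0 π) := by
      apply ContinuousOn.sub
      · exact (Continuous.continuousOn (by fun_prop)).mul hwc
      · exact (Continuous.continuousOn (by fun_prop)).mul hvc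
    have key : ∀ t ∈ Ioo (0:ℝ) π, HasDerivAt g (Real.sin (n * t) * h t) t := by
      intro t ht
      have hnhds : Icc (0:ℝ) π ∈ nhds t := Icc_mem_nhds ht.1 ht.2
      have hIoo : Ioo (0:ℝ) π ∈ nhds t := Ioo_mem_nhds ht.1 ht.2
      have hweq : ∀ s ∈ Ioo (0:ℝ) π, w s = deriv v s := fun s hs =>
        derivWithin_of_mem_nhds (Icc_mem_nhds hs.1 hs.2)
      have hwEv : w =ᶠ[nhds t] deriv v := Filter.eventuallyEq_of_mem hIoo hweq
      have hwdiff : DifferentiableAt ℝ w t :=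
        ((hw1.differentiableOn (by norm_num)) t
          (Ioo_subset_Icc_self ht)).differentiableAt hnhds
      have hdvdiff : DifferentiableAt ℝ (deriv v) t := hwEv.symm.differentiableAt_iff.mpr hwdiff
      have hderiv_eq : deriv w t = deriv (deriv v) t := hwEv.deriv_eq
      have hvd : HasDerivAt v (w t) t := by
        have : DifferentiableAt ℝ v t :=
          ((hv.differentiableOn (by norm_num)) t (Ioo_subset_Icc_self ht)).differentiableAt hnhds
        have h1 := this.hasDerivAt
        rwa [← hweq t ht] at h1
      have hwd : HasDerivAt w (deriv (deriv v) t) t := by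
        rw [← hderiv_eq]; exact hwdiff.hasDerivAt
      have hd := (((hasDerivAt_sin_mul n t).mul hwd)).sub
        (((hasDerivAt_cos_mul n t).const_mul (n : ℝ)).mul hvd)
      refine HasDerivAt.congr_deriv hd ?_
      have hode' := hode t ht
      linear_combination (Real.sin ((n : ℝ) * t)) * hode'
    have hint : IntervalIntegrable (fun t => Real.sin (n * t) * h t) MeasureTheory.volume 0 π := by
      apply ContinuousOn.intervalIntegrable
      rw [uIcc_of_le pi_pos.le]
      exact (Continuous.continuousOn (by fun_prop)).mul hh
    have hftc := intervalIntegral.integral_eq_sub_of_hasDeriv_right_of_le pi_pos.le hgc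
      (fun t ht => (key t ht).hasDerivWithinAt) hint
    rw [hftc]
    have hs : Real.sin ((n : ℝ) * π) = 0 := Real.sin_nat_mul_pi n
    have hc : Real.cos ((n : ℝ) * π) = (-1) ^ n := cos_nat_pi' n
    simp only [hgdef, hs, hc, hv0, hvπ, mul_zero, Real.sin_zero, Real.cos_zero, zero_mul]
    rw [pow_succ]
    ring
  · intro hcond
    set H : ℝ → ℝ := fun t => h (projIcc 0 π pi_pos.le t) with hHdef
    have hHc : Continuous H :=
      hh.comp_continuous (continuous_subtype_val.comp continuous_projIcc)
        (fun x => (projIcc 0 π pi_pos.le x).2)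
    have hHeq : ∀ t ∈ Icc (0:ℝ) π, H t = h t := by
      intro t ht
      simp [hHdef, projIcc_of_mem pi_pos.le ht]
    have hinteq : (∫ s in (0:ℝ)..π, Real.sin (n * s) * H s)
        = ∫ s in (0:ℝ)..π, Real.sin (n * s) * h s := by
      apply intervalIntegral.integral_congr
      intro s hs
      rw [uIcc_of_le pi_pos.le] at hs
      show Real.sin ((n : ℝ) * s) * H s = Real.sin ((n : ℝ) * s) * h s
      rw [hHeq s hs]
    obtain ⟨v, hv, hode, hv0, hvπ⟩ := bvp_construct n hn H hHc h₁
    refine ⟨v, hv.contDiffOn, ?_, hv0, ?_⟩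
    · intro t ht
      rw [← hHeq t (Ioo_subset_Icc_self ht)]
      exact hode t
    · rw [hvπ, hinteq, ← hcond, pow_succ]
      field_simp
      linear_combination h₂ * hpow
end

section
/- Let n be a positive integer and let h : [0,π] → ℝ be continuous. There exists a twice continuously differentiable function v : [0,π] → ℝ satisfying v''(t) + n² v(t) = h(t) for t ∈ (0,π), v(0) = 0, and v(π) = 0 if and only if ∫₀^π sin(n t) h(t) dt = 0. -/
open Set Real MeasureTheory Filter Topology

private lemma hasDerivAt_primitive' {f : ℝ → ℝ} (hf : Continuous f) (t : ℝ) :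
    HasDerivAt (fun u => ∫ x in (0:ℝ)..u, f x) (f t) t :=
  intervalIntegral.integral_hasDerivAt_right (hf.intervalIntegrable 0 t)
    (hf.stronglyMeasurableAtFilter _ _) hf.continuousAt

/-- The resonant Dirichlet problem `v'' + n² v = h` on `(0,π)`,
`v(0) = 0 = v(π)`, has a solution iff `∫₀^π sin(nt) h(t) dt = 0`. -/
theorem resonant_dirichlet_solvability (n : ℕ) (hn : 0 < n)
    (h : ℝ → ℝ) (hh : ContinuousOn h (Icc 0 π)) :
    (∃ v : ℝ → ℝ,
        ContDiffOn ℝ 2 v (Icc 0 π) ∧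
        (∀ t ∈ Ioo (0 : ℝ) π, deriv (deriv v) t + (n : ℝ) ^ 2 * v t = h t) ∧
        v 0 = 0 ∧ v π = 0) ↔
      ∫ t in (0 : ℝ)..π, Real.sin (n * t) * h t = 0 := by
  have hn' : (n : ℝ) ≠ 0 := Nat.cast_ne_zero.mpr hn.ne'
  have hUD : UniqueDiffOn ℝ (Icc (0:ℝ) π) := uniqueDiffOn_Icc pi_pos
  -- derivative of t ↦ sin (n t) and t ↦ cos (n t)
  have hlin : ∀ t : ℝ, HasDerivAt (fun x : ℝ => (n:ℝ) * x) (n:ℝ) t := by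
    intro t
    simpa using (hasDerivAt_id t).const_mul (n:ℝ)
  have hsin : ∀ t : ℝ, HasDerivAt (fun x : ℝ => Real.sin ((n:ℝ) * x))
      ((n:ℝ) * Real.cos ((n:ℝ) * t)) t := by
    intro t
    have h1 := HasDerivAt.comp t (Real.hasDerivAt_sin ((n:ℝ) * t)) (hlin t)
    simpa [Function.comp_def, mul_comm] using h1
  have hcos : ∀ t : ℝ, HasDerivAt (fun x : ℝ => Real.cos ((n:ℝ) * x))
      (-((n:ℝ) * Real.sin ((n:ℝ) * t))) t := by
    intro t
    have h1 := HasDerivAt.comp t (Real.hasDerivAt_cos ((n:ℝ) * t)) (hlin t)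
    simpa [Function.comp_def, mul_comm] using h1
  constructor
  · rintro ⟨v, hv, hode, hv0, hvπ⟩
    set u := derivWithin v (Icc 0 π) with hu
    have hvdiff : DifferentiableOn ℝ v (Icc 0 π) := hv.differentiableOn (by norm_num)
    have hud : ∀ t ∈ Ioo (0:ℝ) π, HasDerivAt v (u t) t := by
      intro t ht
      have h1 : Icc (0:ℝ) π ∈ 𝓝 t := Icc_mem_nhds ht.1 ht.2
      have h2 := ((hvdiff.differentiableAt h1)).hasDerivAt
      rwa [hu, derivWithin_of_mem_nhds h1]
    have hv1 : ContDiffOn ℝ 1 u (Icc 0 π) := hv.derivWithin hUD (by norm_num)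
    set u2 := derivWithin u (Icc 0 π) with hu2
    have hu2d : ∀ t ∈ Ioo (0:ℝ) π, HasDerivAt u (u2 t) t := by
      intro t ht
      have h1 : Icc (0:ℝ) π ∈ 𝓝 t := Icc_mem_nhds ht.1 ht.2
      have h2 := ((hv1.differentiableOn (by norm_num)).differentiableAt h1).hasDerivAt
      rwa [hu2, derivWithin_of_mem_nhds h1]
    have hdd : ∀ t ∈ Ioo (0:ℝ) π, deriv (deriv v) t = u2 t := by
      intro t ht
      have heq : deriv v =ᶠ[𝓝 t] u := by
        filter_upwards [Ioo_mem_nhds ht.1 ht.2] with x hx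
        exact (hud x hx).deriv
      rw [heq.deriv_eq]
      exact (hu2d t ht).deriv
    set W : ℝ → ℝ := fun t => Real.sin ((n:ℝ) * t) * u t - (n:ℝ) * (Real.cos ((n:ℝ) * t) * v t)
      with hW
    have hWc : ContinuousOn W (Icc 0 π) := by
      apply ContinuousOn.sub
      · exact ((Real.continuous_sin.comp (continuous_const.mul continuous_id)).continuousOn).mul
          (hv.continuousOn_derivWithin hUD (by norm_num))
      · exact continuousOn_const.mul
          (((Real.continuous_cos.comp (continuous_const.mul continuous_id)).continuousOn).mul
            hv.continuousOn)
    have hWd : ∀ t ∈ Ioo (0:ℝ) π, HasDerivAt W (Real.sin ((n:ℝ) * t) * h t) t := by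
      intro t ht
      have hu2eq : u2 t = h t - (n:ℝ)^2 * v t := by
        have := hode t ht
        rw [hdd t ht] at this
        linarith
      have hWd' := (((hsin t).mul (hu2d t ht)).sub
        (((hcos t).mul (hud t ht)).const_mul (n:ℝ)))
      convert hWd' using 1
      · rfl
      · rfl
      · rfl
      rw [hu2eq]
      ring
    have hint : IntervalIntegrable (fun t => Real.sin ((n:ℝ) * t) * h t) volume 0 π := by
      apply ContinuousOn.intervalIntegrable
      rw [uIcc_of_le pi_pos.le]
      exact ((Real.continuous_sin.comp (continuous_const.mul continuous_id)).continuousOn).mul hh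
    have key := intervalIntegral.integral_eq_sub_of_hasDerivAt_of_le pi_pos.le hWc hWd hint
    rw [key, hW]
    simp [hv0, hvπ, Real.sin_nat_mul_pi]
  · intro hint0
    set H : ℝ → ℝ := fun t => h (projIcc 0 π pi_pos.le t) with hHdef
    have hHc : Continuous H :=
      hh.comp_continuous (continuous_subtype_val.comp continuous_projIcc)
        (fun x => (projIcc 0 π pi_pos.le x).2)
    have hHeq : ∀ t ∈ Icc (0:ℝ) π, H t = h t := by
      intro t ht
      simp [hHdef, projIcc_of_mem pi_pos.le ht]
    set F : ℝ → ℝ := fun t => ∫ s in (0:ℝ)..t, Real.cos ((n:ℝ) * s) * H s with hFdef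
    set G : ℝ → ℝ := fun t => ∫ s in (0:ℝ)..t, Real.sin ((n:ℝ) * s) * H s with hGdef
    have hFcont : Continuous fun s : ℝ => Real.cos ((n:ℝ) * s) * H s :=
      (Real.continuous_cos.comp (continuous_const.mul continuous_id)).mul hHc
    have hGcont : Continuous fun s : ℝ => Real.sin ((n:ℝ) * s) * H s :=
      (Real.continuous_sin.comp (continuous_const.mul continuous_id)).mul hHc
    have hFd : ∀ t, HasDerivAt F (Real.cos ((n:ℝ) * t) * H t) t :=
      fun t => hasDerivAt_primitive' hFcont t
    have hGd : ∀ t, HasDerivAt G (Real.sin ((n:ℝ) * t) * H t) t :=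
      fun t => hasDerivAt_primitive' hGcont t
    set v : ℝ → ℝ := fun t =>
      ((n:ℝ))⁻¹ * (Real.sin ((n:ℝ) * t) * F t - Real.cos ((n:ℝ) * t) * G t) with hvdef
    set w : ℝ → ℝ := fun t =>
      Real.cos ((n:ℝ) * t) * F t + Real.sin ((n:ℝ) * t) * G t with hwdef
    have hvd : ∀ t, HasDerivAt v (w t) t := by
      intro t
      have hd := (((hsin t).mul (hFd t)).sub ((hcos t).mul (hGd t))).const_mul ((n:ℝ))⁻¹
      convert hd using 1
      · rfl
      · rfl
      · rfl
      rw [hwdef]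
      field_simp
      ring
    have hwd : ∀ t, HasDerivAt w (H t - (n:ℝ)^2 * v t) t := by
      intro t
      have hd := ((hcos t).mul (hFd t)).add ((hsin t).mul (hGd t))
      convert hd using 1
      · rfl
      · rfl
      · rfl
      have hpy := Real.sin_sq_add_cos_sq ((n:ℝ) * t)
      rw [hvdef]
      field_simp
      linear_combination (-(H t)) * hpy
    have hdv : deriv v = w := funext fun t => (hvd t).deriv
    have hdw : deriv w = fun t => H t - (n:ℝ)^2 * v t := funext fun t => (hwd t).deriv
    have hvdiff : Differentiable ℝ v := fun t => (hvd t).differentiableAt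
    have hvcont : Continuous v := hvdiff.continuous
    have hC2 : ContDiff ℝ 2 v := by
      rw [show (2 : WithTop ℕ∞) = 1 + 1 from rfl, contDiff_succ_iff_deriv]
      refine ⟨fun t => (hvd t).differentiableAt, by simp, ?_⟩
      rw [hdv, contDiff_one_iff_deriv, hdw]
      exact ⟨fun t => (hwd t).differentiableAt,
        hHc.sub (continuous_const.mul hvcont)⟩
    refine ⟨v, hC2.contDiffOn, ?_, ?_, ?_⟩
    · intro t ht
      rw [hdv, (hwd t).deriv]
      have := hHeq t (Ioo_subset_Icc_self ht)
      linarith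
    · simp [hvdef, hFdef, hGdef]
    · have hGπ : G π = ∫ t in (0:ℝ)..π, Real.sin (n * t) * h t := by
        apply intervalIntegral.integral_congr
        intro s hs
        rw [uIcc_of_le pi_pos.le] at hs
        show Real.sin ((n:ℝ) * s) * H s = Real.sin ((n:ℝ) * s) * h s
        rw [hHeq s hs]
      simp [hvdef, Real.sin_nat_mul_pi, hGπ.trans hint0]
end

section
/- Let n be a positive integer, let h : [0,π] → ℝ be continuous, and define ω_n : [0,π] × [0,π] → ℝ by ω_n(t,s) = −sin(n t) cos(n s)/n if t ≤ s and ω_n(t,s) = −sin(n s) cos(n t)/n if s ≤ t. Then the function v(t) = ∫₀^π ω_n(t,s) h(s) ds is twice continuously differentiable on [0,π] and satisfies v''(t) + n² v(t) = h(t) for t ∈ (0,π), v(0) = 0, and v(π) = ((−1)^{n+1}/n) ∫₀^π sin(n s) h(s) ds. -/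
open Set Real

/-- The kernel `ω_n(t,s)` built from the solutions `sin(nt)` and `−cos(nt)/n`
of `v'' + n² v = 0`. -/
noncomputable def omegaKernel (n : ℕ) (t s : ℝ) : ℝ :=
  if t ≤ s then -(Real.sin (n * t) * Real.cos (n * s)) / n
  else -(Real.sin (n * s) * Real.cos (n * t)) / n

open intervalIntegral MeasureTheory

noncomputable def Agreen (n : ℕ) (H : ℝ → ℝ) (t : ℝ) : ℝ :=
  ∫ s in (0:ℝ)..t, Real.sin (n * s) * H s

noncomputable def Bgreen (n : ℕ) (H : ℝ → ℝ) (t : ℝ) : ℝ :=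
  ∫ s in t..π, Real.cos (n * s) * H s

noncomputable def wgreen (n : ℕ) (H : ℝ → ℝ) (t : ℝ) : ℝ :=
  (-1 / n) * (Real.cos (n * t) * Agreen n H t + Real.sin (n * t) * Bgreen n H t)

lemma hasDerivAt_Agreen (n : ℕ) {H : ℝ → ℝ} (hH : Continuous H) (t : ℝ) :
    HasDerivAt (Agreen n H) (Real.sin (n * t) * H t) t := by
  have hc : Continuous fun s => Real.sin (n * s) * H s :=
    (Real.continuous_sin.comp (continuous_const.mul continuous_id)).mul hH
  exact integral_hasDerivAt_right (hc.intervalIntegrable _ _)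
    (hc.stronglyMeasurableAtFilter _ _) hc.continuousAt

lemma hasDerivAt_Bgreen (n : ℕ) {H : ℝ → ℝ} (hH : Continuous H) (t : ℝ) :
    HasDerivAt (Bgreen n H) (-(Real.cos (n * t) * H t)) t := by
  have hc : Continuous fun s => Real.cos (n * s) * H s :=
    (Real.continuous_cos.comp (continuous_const.mul continuous_id)).mul hH
  exact integral_hasDerivAt_left (hc.intervalIntegrable _ _)
    (hc.stronglyMeasurableAtFilter _ _) hc.continuousAt

lemma hasDerivAt_wgreen (n : ℕ) (hn : 0 < n) {H : ℝ → ℝ} (hH : Continuous H) (t : ℝ) :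
    HasDerivAt (wgreen n H)
      ((Real.sin (n * t) * Agreen n H t - Real.cos (n * t) * Bgreen n H t)) t := by
  have hA := hasDerivAt_Agreen n hH t
  have hB := hasDerivAt_Bgreen n hH t
  have hcos : HasDerivAt (fun t => Real.cos (n * t)) (-Real.sin (n * t) * n) t :=
    by simpa [Function.comp_def] using (Real.hasDerivAt_cos (n * t)).comp t ((hasDerivAt_id t).const_mul (n:ℝ))
  have hsin : HasDerivAt (fun t => Real.sin (n * t)) (Real.cos (n * t) * n) t :=
    by simpa [Function.comp_def] using (Real.hasDerivAt_sin (n * t)).comp t ((hasDerivAt_id t).const_mul (n:ℝ))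
  have := (((hcos.mul hA).add (hsin.mul hB)).const_mul (-1 / (n:ℝ)))
  refine this.congr_deriv (Eq.symm ?_)
  have hn0 : (n:ℝ) ≠ 0 := Nat.cast_ne_zero.mpr hn.ne'
  field_simp
  ring

lemma hasDerivAt_wgreen' (n : ℕ) (hn : 0 < n) {H : ℝ → ℝ} (hH : Continuous H) (t : ℝ) :
    HasDerivAt (fun t => Real.sin (n * t) * Agreen n H t - Real.cos (n * t) * Bgreen n H t)
      (H t - (n : ℝ) ^ 2 * wgreen n H t) t := by
  have hA := hasDerivAt_Agreen n hH t
  have hB := hasDerivAt_Bgreen n hH t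
  have hcos : HasDerivAt (fun t => Real.cos (n * t)) (-Real.sin (n * t) * n) t :=
    by simpa [Function.comp_def] using (Real.hasDerivAt_cos (n * t)).comp t ((hasDerivAt_id t).const_mul (n:ℝ))
  have hsin : HasDerivAt (fun t => Real.sin (n * t)) (Real.cos (n * t) * n) t :=
    by simpa [Function.comp_def] using (Real.hasDerivAt_sin (n * t)).comp t ((hasDerivAt_id t).const_mul (n:ℝ))
  have := (hsin.mul hA).sub (hcos.mul hB)
  refine this.congr_deriv (Eq.symm ?_)
  have hn0 : (n:ℝ) ≠ 0 := Nat.cast_ne_zero.mpr hn.ne'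
  have hpyth := Real.sin_sq_add_cos_sq ((n:ℝ) * t)
  unfold wgreen
  field_simp
  linear_combination (-(H t)) * hpyth

lemma contDiff_wgreen (n : ℕ) (hn : 0 < n) {H : ℝ → ℝ} (hH : Continuous H) :
    ContDiff ℝ 2 (wgreen n H) := by
  have hA := hasDerivAt_Agreen n hH
  have hB := hasDerivAt_Bgreen n hH
  have hw := hasDerivAt_wgreen n hn hH
  have hw' := hasDerivAt_wgreen' n hn hH
  have hdw : deriv (wgreen n H) =
      fun t => Real.sin (n * t) * Agreen n H t - Real.cos (n * t) * Bgreen n H t :=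
    funext fun t => (hw t).deriv
  have hcA : Continuous (Agreen n H) := by
    have : Differentiable ℝ (Agreen n H) := fun t => (hA t).differentiableAt
    exact this.continuous
  have hcB : Continuous (Bgreen n H) := by
    have : Differentiable ℝ (Bgreen n H) := fun t => (hB t).differentiableAt
    exact this.continuous
  rw [show (2 : WithTop ℕ∞) = 1 + 1 from rfl, contDiff_succ_iff_deriv]
  refine ⟨fun t => (hw t).differentiableAt, by simp, ?_⟩
  rw [hdw, contDiff_one_iff_deriv]
  constructor
  · exact fun t => (hw' t).differentiableAt
  · have hdw' : deriv (fun t => Real.sin (n * t) * Agreen n H t - Real.cos (n * t) * Bgreen n H t)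
        = fun t => H t - (n : ℝ) ^ 2 * wgreen n H t := funext fun t => (hw' t).deriv
    rw [hdw']
    have hcw : Continuous (wgreen n H) := by
      have : Differentiable ℝ (wgreen n H) := fun t => (hw t).differentiableAt
      exact this.continuous
    exact hH.sub (continuous_const.mul hcw)

lemma continuous_omegaKernel (n : ℕ) (t : ℝ) :
    Continuous (fun s => omegaKernel n t s) := by
  unfold omegaKernel
  apply Continuous.if_le _ _ continuous_const continuous_id
  · intro s hs; subst hs; ring
  · fun_prop
  · fun_prop

lemma integral_omega_eq (n : ℕ) (hn : 0 < n) {H : ℝ → ℝ} (hH : Continuous H)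
    {t : ℝ} (ht : t ∈ Icc 0 π) :
    (∫ s in (0:ℝ)..π, omegaKernel n t s * H s) = wgreen n H t := by
  have hf : Continuous (fun s => omegaKernel n t s * H s) :=
    (continuous_omegaKernel n t).mul hH
  have hsplit := integral_add_adjacent_intervals (μ := volume) (a := (0:ℝ)) (b := t) (c := π)
    (hf.intervalIntegrable _ _) (hf.intervalIntegrable _ _)
  have h1 : (∫ s in (0:ℝ)..t, omegaKernel n t s * H s)
      = (-Real.cos (n * t) / n) * Agreen n H t := by
    rw [show (-Real.cos (n * t) / n) * Agreen n H t
        = ∫ s in (0:ℝ)..t, (-Real.cos (n * t) / n) * (Real.sin (n * s) * H s) from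
      (intervalIntegral.integral_const_mul _ _).symm]
    apply intervalIntegral.integral_congr
    intro s hs
    rw [uIcc_of_le ht.1] at hs
    dsimp only
    unfold omegaKernel
    rcases le_or_gt t s with hts | hts
    · have : s = t := le_antisymm hs.2 hts
      subst this
      simp only [if_pos le_rfl]; ring
    · rw [if_neg (not_le.mpr hts)]; ring
  have h2 : (∫ s in t..π, omegaKernel n t s * H s)
      = (-Real.sin (n * t) / n) * Bgreen n H t := by
    rw [show (-Real.sin (n * t) / n) * Bgreen n H t
        = ∫ s in t..π, (-Real.sin (n * t) / n) * (Real.cos (n * s) * H s) from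
      (intervalIntegral.integral_const_mul _ _).symm]
    apply intervalIntegral.integral_congr
    intro s hs
    rw [uIcc_of_le ht.2] at hs
    dsimp only
    unfold omegaKernel
    rw [if_pos hs.1]; ring
  rw [← hsplit, h1, h2]
  unfold wgreen
  ring

/-- The generalized Green's operator `v(t) = ∫₀^π ω_n(t,s) h(s) ds`
produces a twice continuously differentiable function satisfying `v'' + n² v = h`
on `(0,π)`, `v(0) = 0`, and `v(π) = ((−1)^{n+1}/n) ∫₀^π sin(ns) h(s) ds`. -/
theorem green_operator_properties (n : ℕ) (hn : 0 < n)
    (h : ℝ → ℝ) (hh : ContinuousOn h (Icc 0 π)) :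
    ContDiffOn ℝ 2 (fun t => ∫ s in (0 : ℝ)..π, omegaKernel n t s * h s) (Icc 0 π) ∧
    (∀ t ∈ Ioo (0 : ℝ) π,
        deriv (deriv (fun t' => ∫ s in (0 : ℝ)..π, omegaKernel n t' s * h s)) t +
          (n : ℝ) ^ 2 * (∫ s in (0 : ℝ)..π, omegaKernel n t s * h s) = h t) ∧
    (∫ s in (0 : ℝ)..π, omegaKernel n 0 s * h s) = 0 ∧
    (∫ s in (0 : ℝ)..π, omegaKernel n π s * h s) =
      ((-1 : ℝ) ^ (n + 1) / n) * ∫ s in (0 : ℝ)..π, Real.sin (n * s) * h s := by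
  have hn0 : (n : ℝ) ≠ 0 := Nat.cast_ne_zero.mpr hn.ne'
  set H : ℝ → ℝ := fun x => h (projIcc 0 π pi_pos.le x) with hHdef
  have hH : Continuous H :=
    hh.comp_continuous (continuous_subtype_val.comp continuous_projIcc)
      (fun x => Subtype.coe_prop _)
  have hHeq : ∀ s ∈ Icc (0:ℝ) π, H s = h s := by
    intro s hs
    simp only [hHdef, projIcc_of_mem pi_pos.le hs]
  -- the function in the statement agrees with `wgreen n H` on `Icc 0 π`
  have hveq : ∀ t ∈ Icc (0:ℝ) π,
      (∫ s in (0 : ℝ)..π, omegaKernel n t s * h s) = wgreen n H t := by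
    intro t ht
    rw [← integral_omega_eq n hn hH ht]
    apply intervalIntegral.integral_congr
    intro s hs
    rw [uIcc_of_le pi_pos.le] at hs
    dsimp only
    rw [hHeq s hs]
  refine ⟨?_, ?_, ?_, ?_⟩
  · exact ((contDiff_wgreen n hn hH).contDiffOn).congr hveq
  · intro t ht
    have hev : (fun t' => ∫ s in (0 : ℝ)..π, omegaKernel n t' s * h s)
        =ᶠ[nhds t] wgreen n H :=
      Filter.eventuallyEq_of_mem (isOpen_Ioo.mem_nhds ht)
        (fun x hx => hveq x (Ioo_subset_Icc_self hx))
    have hd2 : deriv (deriv (fun t' => ∫ s in (0 : ℝ)..π, omegaKernel n t' s * h s)) t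
        = deriv (deriv (wgreen n H)) t := hev.deriv.deriv_eq
    have hdw : deriv (wgreen n H) =
        fun t => Real.sin (n * t) * Agreen n H t - Real.cos (n * t) * Bgreen n H t :=
      funext fun t => (hasDerivAt_wgreen n hn hH t).deriv
    have hdw2 : deriv (deriv (wgreen n H)) t = H t - (n : ℝ) ^ 2 * wgreen n H t := by
      rw [hdw]; exact (hasDerivAt_wgreen' n hn hH t).deriv
    rw [hd2, hdw2, hveq t (Ioo_subset_Icc_self ht), hHeq t (Ioo_subset_Icc_self ht)]
    ring
  · rw [hveq 0 (left_mem_Icc.mpr pi_pos.le)]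
    unfold wgreen Agreen
    simp
  · rw [hveq π (right_mem_Icc.mpr pi_pos.le)]
    unfold wgreen
    have hs0 : Real.sin ((n:ℝ) * π) = 0 := Real.sin_nat_mul_pi n
    have hc : Real.cos ((n:ℝ) * π) = (-1 : ℝ) ^ n := by
      simpa using Real.cos_nat_mul_pi_sub 0 n
    have hAeq : Agreen n H π = ∫ s in (0 : ℝ)..π, Real.sin (n * s) * h s := by
      unfold Agreen
      apply intervalIntegral.integral_congr
      intro s hs
      rw [uIcc_of_le pi_pos.le] at hs
      dsimp only
      rw [hHeq s hs]
    rw [hs0, hc, hAeq, pow_succ]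
    ring
end

section
/- Let n be an even positive integer, let m be a positive integer with m > 2, let K > 0, and let t₁ ∈ [0,π] satisfy sin(n t₁) ≠ 0 (equivalently, t₁ ≠ kπ/n for every k ∈ {0, 1, …, n}). Then there exists δ > 0 such that for every ε with |ε| < δ there exists a twice continuously differentiable function v : [0,π] → ℝ satisfying v''(t) + n² v(t) = ε v(t)² for t ∈ (0,π), v(0) = 1 + ε v(t₁)^m, and v(π) = 1 + ε K. -/
open Set Real MeasureTheory intervalIntegral
open scoped NNReal

noncomputable section
namespace ResBVP

abbrev CI := C(Icc (0:ℝ) π, ℝ)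

/-- truncation at level `R` -/
def cut (R x : ℝ) : ℝ := max (-R) (min R x)

lemma cut_continuous (R : ℝ) : Continuous (cut R) :=
  continuous_const.max (continuous_const.min continuous_id)

lemma abs_cut_le {R : ℝ} (hR : 0 ≤ R) (x : ℝ) : |cut R x| ≤ R :=
  abs_le.2 ⟨le_max_left _ _, max_le (by linarith) (min_le_left _ _)⟩

lemma cut_eq {R x : ℝ} (h : |x| ≤ R) : cut R x = x := by
  obtain ⟨h1, h2⟩ := abs_le.1 h
  unfold cut
  rw [min_eq_right h2, max_eq_right h1]

lemma cut_lip (R x y : ℝ) : |cut R x - cut R y| ≤ |x - y| := by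
  unfold cut
  rw [max_comm (-R) (min R x), max_comm (-R) (min R y)]
  refine (abs_max_sub_max_le_abs _ _ _).trans ?_
  rw [min_comm R x, min_comm R y]
  have := abs_min_sub_min_le_max x R y R
  simpa using this

def uu (R : ℝ) (V : CI) : ℝ → ℝ := fun s => cut R (V (projIcc 0 π pi_nonneg s))

lemma uu_continuous (R : ℝ) (V : CI) : Continuous (uu R V) :=
  (cut_continuous R).comp (V.continuous.comp continuous_projIcc)

lemma abs_uu_le {R : ℝ} (hR : 0 ≤ R) (V : CI) (s : ℝ) : |uu R V s| ≤ R := abs_cut_le hR _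

lemma uu_dist_le (R : ℝ) (V W : CI) (s : ℝ) : |uu R V s - uu R W s| ≤ dist V W := by
  refine (cut_lip R _ _).trans ?_
  rw [← Real.dist_eq]
  exact ContinuousMap.dist_apply_le_dist _

lemma uu_eq {R : ℝ} {V : CI} (hV : ∀ x, |V x| ≤ R) (s : ℝ) :
    uu R V s = V (projIcc 0 π pi_nonneg s) := cut_eq (hV _)

lemma uu_sq_dist_le {R : ℝ} (hR : 0 ≤ R) (V W : CI) (s : ℝ) :
    |uu R V s ^ 2 - uu R W s ^ 2| ≤ 2 * R * dist V W := by
  have h1 := uu_dist_le R V W s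
  have h2 := abs_uu_le hR V s
  have h3 := abs_uu_le hR W s
  have : uu R V s ^ 2 - uu R W s ^ 2 = (uu R V s + uu R W s) * (uu R V s - uu R W s) := by ring
  rw [this, abs_mul]
  have h4 : |uu R V s + uu R W s| ≤ 2 * R := (abs_add_le _ _).trans (by linarith)
  have h0 : (0:ℝ) ≤ dist V W := dist_nonneg
  calc |uu R V s + uu R W s| * |uu R V s - uu R W s| ≤ (2*R) * dist V W := by
        exact mul_le_mul h4 h1 (abs_nonneg _) (by linarith)
    _ = 2 * R * dist V W := by ring

/-- F-primitive -/
def FF (ν R : ℝ) (V : CI) (t : ℝ) : ℝ := ∫ s in (0:ℝ)..t, Real.cos (ν*s) * (uu R V s)^2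

/-- G-primitive -/
def GG (ν R : ℝ) (V : CI) (t : ℝ) : ℝ := ∫ s in (0:ℝ)..t, Real.sin (ν*s) * (uu R V s)^2

lemma FF_integrand_continuous (ν R : ℝ) (V : CI) :
    Continuous (fun s => Real.cos (ν*s) * (uu R V s)^2) :=
  (Real.continuous_cos.comp (continuous_const.mul continuous_id)).mul
    ((uu_continuous R V).pow 2)

lemma GG_integrand_continuous (ν R : ℝ) (V : CI) :
    Continuous (fun s => Real.sin (ν*s) * (uu R V s)^2) :=
  (Real.continuous_sin.comp (continuous_const.mul continuous_id)).mul
    ((uu_continuous R V).pow 2)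

lemma FF_hasDerivAt (ν R : ℝ) (V : CI) (t : ℝ) :
    HasDerivAt (FF ν R V) (Real.cos (ν*t) * (uu R V t)^2) t := by
  have hc := FF_integrand_continuous ν R V
  exact intervalIntegral.integral_hasDerivAt_right (hc.intervalIntegrable _ _)
    hc.aestronglyMeasurable.stronglyMeasurableAtFilter hc.continuousAt

lemma GG_hasDerivAt (ν R : ℝ) (V : CI) (t : ℝ) :
    HasDerivAt (GG ν R V) (Real.sin (ν*t) * (uu R V t)^2) t := by
  have hc := GG_integrand_continuous ν R V
  exact intervalIntegral.integral_hasDerivAt_right (hc.intervalIntegrable _ _)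
    hc.aestronglyMeasurable.stronglyMeasurableAtFilter hc.continuousAt

lemma FF_continuous (ν R : ℝ) (V : CI) : Continuous (FF ν R V) :=
  continuous_iff_continuousAt.2 fun t => (FF_hasDerivAt ν R V t).continuousAt

lemma GG_continuous (ν R : ℝ) (V : CI) : Continuous (GG ν R V) :=
  continuous_iff_continuousAt.2 fun t => (GG_hasDerivAt ν R V t).continuousAt

lemma abs_FF_le {R : ℝ} (hR : 0 ≤ R) (ν : ℝ) (V : CI) {t : ℝ} (ht : t ∈ Icc (0:ℝ) π) :
    |FF ν R V t| ≤ π * R^2 := by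
  have : ‖∫ s in (0:ℝ)..t, Real.cos (ν*s) * (uu R V s)^2‖ ≤ R^2 * |t - 0| := by
    apply intervalIntegral.norm_integral_le_of_norm_le_const
    intro x _
    rw [Real.norm_eq_abs, abs_mul]
    calc |Real.cos (ν*x)| * |(uu R V x)^2| ≤ 1 * R^2 := by
          apply mul_le_mul (Real.abs_cos_le_one _) ?_ (abs_nonneg _) zero_le_one
          rw [abs_pow]
          exact pow_le_pow_left₀ (abs_nonneg _) (abs_uu_le hR V x) 2
      _ = R^2 := one_mul _
  rw [Real.norm_eq_abs] at this
  refine this.trans ?_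
  rw [sub_zero, abs_of_nonneg ht.1]
  nlinarith [ht.2, sq_nonneg R]

lemma abs_GG_le {R : ℝ} (hR : 0 ≤ R) (ν : ℝ) (V : CI) {t : ℝ} (ht : t ∈ Icc (0:ℝ) π) :
    |GG ν R V t| ≤ π * R^2 := by
  have : ‖∫ s in (0:ℝ)..t, Real.sin (ν*s) * (uu R V s)^2‖ ≤ R^2 * |t - 0| := by
    apply intervalIntegral.norm_integral_le_of_norm_le_const
    intro x _
    rw [Real.norm_eq_abs, abs_mul]
    calc |Real.sin (ν*x)| * |(uu R V x)^2| ≤ 1 * R^2 := by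
          apply mul_le_mul (Real.abs_sin_le_one _) ?_ (abs_nonneg _) zero_le_one
          rw [abs_pow]
          exact pow_le_pow_left₀ (abs_nonneg _) (abs_uu_le hR V x) 2
      _ = R^2 := one_mul _
  rw [Real.norm_eq_abs] at this
  refine this.trans ?_
  rw [sub_zero, abs_of_nonneg ht.1]
  nlinarith [ht.2, sq_nonneg R]

lemma FF_dist_le {R : ℝ} (hR : 0 ≤ R) (ν : ℝ) (V W : CI) {t : ℝ} (ht : t ∈ Icc (0:ℝ) π) :
    |FF ν R V t - FF ν R W t| ≤ π * (2 * R * dist V W) := by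
  have hint : FF ν R V t - FF ν R W t
      = ∫ s in (0:ℝ)..t, (Real.cos (ν*s) * (uu R V s)^2 - Real.cos (ν*s) * (uu R W s)^2) := by
    rw [intervalIntegral.integral_sub ((FF_integrand_continuous ν R V).intervalIntegrable _ _)
      ((FF_integrand_continuous ν R W).intervalIntegrable _ _)]
    rfl
  rw [hint]
  have : ‖∫ s in (0:ℝ)..t, (Real.cos (ν*s) * (uu R V s)^2 - Real.cos (ν*s) * (uu R W s)^2)‖
      ≤ (2 * R * dist V W) * |t - 0| := by
    apply intervalIntegral.norm_integral_le_of_norm_le_const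
    intro x _
    rw [Real.norm_eq_abs]
    have : Real.cos (ν*x) * (uu R V x)^2 - Real.cos (ν*x) * (uu R W x)^2
        = Real.cos (ν*x) * ((uu R V x)^2 - (uu R W x)^2) := by ring
    rw [this, abs_mul]
    calc |Real.cos (ν*x)| * |(uu R V x)^2 - (uu R W x)^2| ≤ 1 * (2 * R * dist V W) :=
          mul_le_mul (Real.abs_cos_le_one _) (uu_sq_dist_le hR V W x) (abs_nonneg _) zero_le_one
      _ = 2 * R * dist V W := one_mul _
  rw [Real.norm_eq_abs] at this
  refine this.trans ?_
  rw [sub_zero, abs_of_nonneg ht.1]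
  have h2 : (0:ℝ) ≤ 2 * R * dist V W := by positivity
  nlinarith [ht.2]

lemma GG_dist_le {R : ℝ} (hR : 0 ≤ R) (ν : ℝ) (V W : CI) {t : ℝ} (ht : t ∈ Icc (0:ℝ) π) :
    |GG ν R V t - GG ν R W t| ≤ π * (2 * R * dist V W) := by
  have hint : GG ν R V t - GG ν R W t
      = ∫ s in (0:ℝ)..t, (Real.sin (ν*s) * (uu R V s)^2 - Real.sin (ν*s) * (uu R W s)^2) := by
    rw [intervalIntegral.integral_sub ((GG_integrand_continuous ν R V).intervalIntegrable _ _)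
      ((GG_integrand_continuous ν R W).intervalIntegrable _ _)]
    rfl
  rw [hint]
  have : ‖∫ s in (0:ℝ)..t, (Real.sin (ν*s) * (uu R V s)^2 - Real.sin (ν*s) * (uu R W s)^2)‖
      ≤ (2 * R * dist V W) * |t - 0| := by
    apply intervalIntegral.norm_integral_le_of_norm_le_const
    intro x _
    rw [Real.norm_eq_abs]
    have : Real.sin (ν*x) * (uu R V x)^2 - Real.sin (ν*x) * (uu R W x)^2
        = Real.sin (ν*x) * ((uu R V x)^2 - (uu R W x)^2) := by ring
    rw [this, abs_mul]
    calc |Real.sin (ν*x)| * |(uu R V x)^2 - (uu R W x)^2| ≤ 1 * (2 * R * dist V W) :=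
          mul_le_mul (Real.abs_sin_le_one _) (uu_sq_dist_le hR V W x) (abs_nonneg _) zero_le_one
      _ = 2 * R * dist V W := one_mul _
  rw [Real.norm_eq_abs] at this
  refine this.trans ?_
  rw [sub_zero, abs_of_nonneg ht.1]
  have h2 : (0:ℝ) ≤ 2 * R * dist V W := by positivity
  nlinarith [ht.2]



/-- the boundary coefficient -/
def AA (m : ℕ) (t₁ ε R : ℝ) (V : CI) : ℝ := 1 + ε * (uu R V t₁)^m

/-- main solution formula -/
def vRaw (ν : ℝ) (m : ℕ) (t₁ ε β R : ℝ) (V : CI) (t : ℝ) : ℝ :=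
  AA m t₁ ε R V * Real.cos (ν*t) + (β/ν) * Real.sin (ν*t)
    + (ε/ν) * (Real.sin (ν*t) * FF ν R V t - Real.cos (ν*t) * GG ν R V t)

def v1 (ν : ℝ) (m : ℕ) (t₁ ε β R : ℝ) (V : CI) (t : ℝ) : ℝ :=
  -(AA m t₁ ε R V * ν) * Real.sin (ν*t) + β * Real.cos (ν*t)
    + ε * (Real.cos (ν*t) * FF ν R V t + Real.sin (ν*t) * GG ν R V t)

def v2 (ν : ℝ) (m : ℕ) (t₁ ε β R : ℝ) (V : CI) (t : ℝ) : ℝ :=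
  -(AA m t₁ ε R V * ν^2) * Real.cos (ν*t) - (β*ν) * Real.sin (ν*t)
    + ε * (uu R V t)^2 + (ε*ν) * (Real.cos (ν*t) * GG ν R V t - Real.sin (ν*t) * FF ν R V t)

lemma hasDerivAt_cos_nu (ν t : ℝ) :
    HasDerivAt (fun t => Real.cos (ν*t)) (-(Real.sin (ν*t)) * ν) t := by
  simpa [Function.comp_def] using (Real.hasDerivAt_cos (ν*t)).comp t ((hasDerivAt_id t).const_mul ν)

lemma hasDerivAt_sin_nu (ν t : ℝ) :
    HasDerivAt (fun t => Real.sin (ν*t)) (Real.cos (ν*t) * ν) t := by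
  simpa [Function.comp_def] using (Real.hasDerivAt_sin (ν*t)).comp t ((hasDerivAt_id t).const_mul ν)

lemma vRaw_hasDerivAt {ν : ℝ} (hν : ν ≠ 0) (m : ℕ) (t₁ ε β R : ℝ) (V : CI) (t : ℝ) :
    HasDerivAt (vRaw ν m t₁ ε β R V) (v1 ν m t₁ ε β R V t) t := by
  have h1 : HasDerivAt (fun t => AA m t₁ ε R V * Real.cos (ν*t))
      (AA m t₁ ε R V * (-(Real.sin (ν*t)) * ν)) t := (hasDerivAt_cos_nu ν t).const_mul _
  have h2 : HasDerivAt (fun t => (β/ν) * Real.sin (ν*t)) ((β/ν) * (Real.cos (ν*t) * ν)) t :=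
    (hasDerivAt_sin_nu ν t).const_mul _
  have h3 : HasDerivAt (fun t => Real.sin (ν*t) * FF ν R V t)
      (Real.cos (ν*t) * ν * FF ν R V t + Real.sin (ν*t) * (Real.cos (ν*t) * (uu R V t)^2)) t :=
    (hasDerivAt_sin_nu ν t).mul (FF_hasDerivAt ν R V t)
  have h4 : HasDerivAt (fun t => Real.cos (ν*t) * GG ν R V t)
      (-(Real.sin (ν*t)) * ν * GG ν R V t + Real.cos (ν*t) * (Real.sin (ν*t) * (uu R V t)^2)) t :=
    (hasDerivAt_cos_nu ν t).mul (GG_hasDerivAt ν R V t)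
  have h := (h1.add h2).add (((h3.sub h4)).const_mul (ε/ν))
  refine h.congr_deriv ?_
  symm
  unfold v1
  field_simp
  ring

lemma v1_hasDerivAt {ν : ℝ} (hν : ν ≠ 0) (m : ℕ) (t₁ ε β R : ℝ) (V : CI) (t : ℝ) :
    HasDerivAt (v1 ν m t₁ ε β R V) (v2 ν m t₁ ε β R V t) t := by
  have h1 : HasDerivAt (fun t => -(AA m t₁ ε R V * ν) * Real.sin (ν*t))
      (-(AA m t₁ ε R V * ν) * (Real.cos (ν*t) * ν)) t := (hasDerivAt_sin_nu ν t).const_mul _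
  have h2 : HasDerivAt (fun t => β * Real.cos (ν*t)) (β * (-(Real.sin (ν*t)) * ν)) t :=
    (hasDerivAt_cos_nu ν t).const_mul _
  have h3 : HasDerivAt (fun t => Real.cos (ν*t) * FF ν R V t)
      (-(Real.sin (ν*t)) * ν * FF ν R V t + Real.cos (ν*t) * (Real.cos (ν*t) * (uu R V t)^2)) t :=
    (hasDerivAt_cos_nu ν t).mul (FF_hasDerivAt ν R V t)
  have h4 : HasDerivAt (fun t => Real.sin (ν*t) * GG ν R V t)
      (Real.cos (ν*t) * ν * GG ν R V t + Real.sin (ν*t) * (Real.sin (ν*t) * (uu R V t)^2)) t :=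
    (hasDerivAt_sin_nu ν t).mul (GG_hasDerivAt ν R V t)
  have h := (h1.add h2).add ((h3.add h4).const_mul ε)
  refine h.congr_deriv ?_
  symm
  unfold v2
  have hpyth : Real.sin (ν*t)^2 + Real.cos (ν*t)^2 = 1 := Real.sin_sq_add_cos_sq _
  linear_combination (-(ε * uu R V t ^ 2)) * hpyth

lemma ode_identity {ν : ℝ} (hν : ν ≠ 0) (m : ℕ) (t₁ ε β R : ℝ) (V : CI) (t : ℝ) :
    v2 ν m t₁ ε β R V t + ν^2 * vRaw ν m t₁ ε β R V t = ε * (uu R V t)^2 := by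
  unfold v2 vRaw
  field_simp
  ring

lemma vRaw_continuous (ν : ℝ) (m : ℕ) (t₁ ε β R : ℝ) (V : CI) :
    Continuous (vRaw ν m t₁ ε β R V) := by
  unfold vRaw
  have hc : Continuous fun t => Real.cos (ν*t) :=
    Real.continuous_cos.comp (continuous_const.mul continuous_id)
  have hs : Continuous fun t => Real.sin (ν*t) :=
    Real.continuous_sin.comp (continuous_const.mul continuous_id)
  exact ((continuous_const.mul hc).add (continuous_const.mul hs)).add
    (continuous_const.mul ((hs.mul (FF_continuous ν R V)).sub (hc.mul (GG_continuous ν R V))))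

/-- the fixed-point operator -/
def Top (ν : ℝ) (m : ℕ) (t₁ ε β R : ℝ) (V : CI) : CI :=
  ⟨fun t => vRaw ν m t₁ ε β R V t, (vRaw_continuous ν m t₁ ε β R V).comp continuous_subtype_val⟩

lemma Top_apply (ν : ℝ) (m : ℕ) (t₁ ε β R : ℝ) (V : CI) (t : Icc (0:ℝ) π) :
    Top ν m t₁ ε β R V t = vRaw ν m t₁ ε β R V t := rfl

/-- |x^m - y^m| ≤ m R^(m-1) |x-y| on [-R,R] -/
lemma abs_pow_sub_pow_le {R x y : ℝ} (hx : |x| ≤ R) (hy : |y| ≤ R) (m : ℕ) :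
    |x^m - y^m| ≤ m * R^(m-1) * |x - y| := by
  have hR : 0 ≤ R := le_trans (abs_nonneg x) hx
  induction m with
  | zero => simp
  | succ k ih =>
    have key : x^(k+1) - y^(k+1) = x^k * (x - y) + y * (x^k - y^k) := by ring
    rw [key]
    refine (abs_add_le _ _).trans ?_
    rw [abs_mul, abs_mul]
    have hxk : |x^k| ≤ R^k := by rw [abs_pow]; exact pow_le_pow_left₀ (abs_nonneg _) hx k
    have h2 : |y| * |x^k - y^k| ≤ R * (k * R^(k-1) * |x-y|) :=
      mul_le_mul hy ih (abs_nonneg _) hR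
    have h1 : |x^k| * |x-y| ≤ R^k * |x-y| := mul_le_mul_of_nonneg_right hxk (abs_nonneg _)
    have hcase : R * (k * R^(k-1)) ≤ k * R^k := by
      rcases Nat.eq_zero_or_pos k with hk | hk
      · subst hk; simp
      · have hRk : R * R^(k-1) = R^k := by
          rw [← pow_succ']
          congr 1
          omega
        refine le_of_eq ?_
        rw [← hRk]; ring
    have : (k+1 : ℕ) * R^((k+1)-1) * |x-y| = R^k * |x-y| + (k * R^k) * |x-y| := by
      simp only [Nat.add_sub_cancel]
      push_cast
      ring
    rw [this]
    have h2' : R * (k * R^(k-1) * |x-y|) ≤ (k * R^k) * |x-y| := by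
      calc R * (k * R^(k-1) * |x-y|) = (R * (k * R^(k-1))) * |x-y| := by ring
        _ ≤ (k * R^k) * |x-y| := mul_le_mul_of_nonneg_right hcase (abs_nonneg _)
    linarith

/-- the key resonance integral vanishes -/
lemma key_integral_zero {ν : ℝ} (hν : ν ≠ 0) (hsπ : Real.sin (ν*π) = 0)
    (hcπ : Real.cos (ν*π) = 1) (b : ℝ) :
    ∫ s in (0:ℝ)..π, Real.sin (ν*s) * (Real.cos (ν*s) + b * Real.sin (ν*s))^2 = 0 := by
  set P : ℝ → ℝ := fun s =>
    (-(Real.cos (ν*s))^3/(3*ν)) + 2*b*(Real.sin (ν*s))^3/(3*ν)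
      + b^2 * (-(Real.cos (ν*s))/ν + (Real.cos (ν*s))^3/(3*ν)) with hP
  have hderiv : ∀ s : ℝ, HasDerivAt P (Real.sin (ν*s) * (Real.cos (ν*s) + b * Real.sin (ν*s))^2) s := by
    intro s
    have hc : HasDerivAt (fun s => Real.cos (ν*s)) (-(Real.sin (ν*s)) * ν) s := by
      simpa [Function.comp_def] using (Real.hasDerivAt_cos (ν*s)).comp s ((hasDerivAt_id s).const_mul ν)
    have hs : HasDerivAt (fun s => Real.sin (ν*s)) (Real.cos (ν*s) * ν) s := by
      simpa [Function.comp_def] using (Real.hasDerivAt_sin (ν*s)).comp s ((hasDerivAt_id s).const_mul ν)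
    have hc3 : HasDerivAt (fun s => (Real.cos (ν*s))^3)
        (3 * (Real.cos (ν*s))^2 * (-(Real.sin (ν*s)) * ν)) s := by
      simpa using hc.fun_pow 3
    have hs3 : HasDerivAt (fun s => (Real.sin (ν*s))^3)
        (3 * (Real.sin (ν*s))^2 * (Real.cos (ν*s) * ν)) s := by
      simpa using hs.fun_pow 3
    have h1 := ((hc3.neg.div_const (3*ν)).add ((hs3.const_mul (2*b)).div_const (3*ν))).add
      (((hc.neg.div_const ν).add (hc3.div_const (3*ν))).const_mul (b^2))
    refine h1.congr_deriv ?_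
    symm
    have hpyth : Real.sin (ν*s)^2 + Real.cos (ν*s)^2 = 1 := Real.sin_sq_add_cos_sq _
    field_simp
    linear_combination (Real.sin (ν*s) * b^2) * hpyth
  have hint : (∫ s in (0:ℝ)..π, Real.sin (ν*s) * (Real.cos (ν*s) + b * Real.sin (ν*s))^2)
      = P π - P 0 := by
    apply intervalIntegral.integral_eq_sub_of_hasDerivAt (fun s _ => hderiv s)
    apply Continuous.intervalIntegrable
    have hcc : Continuous fun s => Real.cos (ν*s) :=
      Real.continuous_cos.comp (continuous_const.mul continuous_id)
    have hsc : Continuous fun s => Real.sin (ν*s) :=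
      Real.continuous_sin.comp (continuous_const.mul continuous_id)
    exact hsc.mul ((hcc.add (continuous_const.mul hsc)).pow 2)
  rw [hint, hP]
  simp only [mul_zero, Real.cos_zero, Real.sin_zero, hsπ, hcπ]
  ring



lemma linbound (ν β : ℝ) (hν : 0 < ν) (t : ℝ) :
    |Real.cos (ν*t) + (β/ν) * Real.sin (ν*t)| ≤ 1 + |β|/ν := by
  refine (abs_add_le _ _).trans ?_
  have h1 := Real.abs_cos_le_one (ν*t)
  have h2 : |(β/ν) * Real.sin (ν*t)| ≤ |β|/ν := by
    rw [abs_mul, abs_div, abs_of_pos hν]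
    calc |β|/ν * |Real.sin (ν*t)| ≤ |β|/ν * 1 :=
        mul_le_mul_of_nonneg_left (Real.abs_sin_le_one _) (by positivity)
      _ = |β|/ν := mul_one _
  linarith

lemma vRaw_close {ν R : ℝ} (hν : 0 < ν) (hR : 0 ≤ R) (m : ℕ) (t₁ ε β : ℝ) (V : CI)
    {t : ℝ} (ht : t ∈ Icc (0:ℝ) π) :
    |vRaw ν m t₁ ε β R V t - (Real.cos (ν*t) + (β/ν) * Real.sin (ν*t))|
      ≤ |ε| * (R^m + 2*π*R^2/ν) := by
  have hdiff : vRaw ν m t₁ ε β R V t - (Real.cos (ν*t) + (β/ν) * Real.sin (ν*t))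
      = (ε * (uu R V t₁)^m) * Real.cos (ν*t)
        + (ε/ν) * (Real.sin (ν*t) * FF ν R V t - Real.cos (ν*t) * GG ν R V t) := by
    unfold vRaw AA; ring
  rw [hdiff]
  refine (abs_add_le _ _).trans ?_
  have h1 : |(ε * (uu R V t₁)^m) * Real.cos (ν*t)| ≤ |ε| * R^m := by
    rw [abs_mul, abs_mul, abs_pow]
    calc |ε| * |uu R V t₁|^m * |Real.cos (ν*t)| ≤ |ε| * R^m * 1 := by
          gcongr
          · exact abs_uu_le hR V t₁
          · exact Real.abs_cos_le_one _
      _ = |ε| * R^m := mul_one _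
  have h2 : |(ε/ν) * (Real.sin (ν*t) * FF ν R V t - Real.cos (ν*t) * GG ν R V t)|
      ≤ |ε| * (2*π*R^2/ν) := by
    rw [abs_mul, abs_div, abs_of_pos hν]
    have hF := abs_FF_le hR ν V ht
    have hG := abs_GG_le hR ν V ht
    have hs := Real.abs_sin_le_one (ν*t)
    have hc := Real.abs_cos_le_one (ν*t)
    have hb : |Real.sin (ν*t) * FF ν R V t - Real.cos (ν*t) * GG ν R V t| ≤ 2 * (π * R^2) := by
      refine (abs_sub _ _).trans ?_
      rw [abs_mul, abs_mul]
      have b1 : |Real.sin (ν*t)| * |FF ν R V t| ≤ 1 * (π * R^2) :=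
        mul_le_mul hs hF (abs_nonneg _) zero_le_one
      have b2 : |Real.cos (ν*t)| * |GG ν R V t| ≤ 1 * (π * R^2) :=
        mul_le_mul hc hG (abs_nonneg _) zero_le_one
      linarith
    calc |ε|/ν * |Real.sin (ν*t) * FF ν R V t - Real.cos (ν*t) * GG ν R V t|
        ≤ |ε|/ν * (2 * (π * R^2)) := mul_le_mul_of_nonneg_left hb (by positivity)
      _ = |ε| * (2*π*R^2/ν) := by ring
  linarith

lemma vRaw_dist_le {ν R : ℝ} (hν : 0 < ν) (hR : 0 ≤ R) (m : ℕ) (t₁ ε β : ℝ) (V W : CI)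
    {t : ℝ} (ht : t ∈ Icc (0:ℝ) π) :
    |vRaw ν m t₁ ε β R V t - vRaw ν m t₁ ε β R W t|
      ≤ |ε| * (m*R^(m-1) + 4*π*R/ν) * dist V W := by
  have hdiff : vRaw ν m t₁ ε β R V t - vRaw ν m t₁ ε β R W t
      = (ε * ((uu R V t₁)^m - (uu R W t₁)^m)) * Real.cos (ν*t)
        + (ε/ν) * (Real.sin (ν*t) * (FF ν R V t - FF ν R W t)
            - Real.cos (ν*t) * (GG ν R V t - GG ν R W t)) := by
    unfold vRaw AA; ring
  rw [hdiff]
  refine (abs_add_le _ _).trans ?_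
  have hd0 : (0:ℝ) ≤ dist V W := dist_nonneg
  have h1 : |(ε * ((uu R V t₁)^m - (uu R W t₁)^m)) * Real.cos (ν*t)|
      ≤ |ε| * (m*R^(m-1)) * dist V W := by
    rw [abs_mul, abs_mul]
    have hp : |(uu R V t₁)^m - (uu R W t₁)^m| ≤ m*R^(m-1) * dist V W := by
      refine (abs_pow_sub_pow_le (abs_uu_le hR V t₁) (abs_uu_le hR W t₁) m).trans ?_
      exact mul_le_mul_of_nonneg_left (uu_dist_le R V W t₁) (by positivity)
    calc |ε| * |(uu R V t₁)^m - (uu R W t₁)^m| * |Real.cos (ν*t)|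
        ≤ |ε| * (m*R^(m-1) * dist V W) * 1 := by
          gcongr
          exact Real.abs_cos_le_one _
      _ = |ε| * (m*R^(m-1)) * dist V W := by ring
  have h2 : |(ε/ν) * (Real.sin (ν*t) * (FF ν R V t - FF ν R W t)
        - Real.cos (ν*t) * (GG ν R V t - GG ν R W t))|
      ≤ |ε| * (4*π*R/ν) * dist V W := by
    rw [abs_mul, abs_div, abs_of_pos hν]
    have hF := FF_dist_le hR ν V W ht
    have hG := GG_dist_le hR ν V W ht
    have hs := Real.abs_sin_le_one (ν*t)
    have hc := Real.abs_cos_le_one (ν*t)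
    have hb : |Real.sin (ν*t) * (FF ν R V t - FF ν R W t)
        - Real.cos (ν*t) * (GG ν R V t - GG ν R W t)| ≤ 2 * (π * (2 * R * dist V W)) := by
      refine (abs_sub _ _).trans ?_
      rw [abs_mul, abs_mul]
      have b1 : |Real.sin (ν*t)| * |FF ν R V t - FF ν R W t| ≤ 1 * (π * (2 * R * dist V W)) :=
        mul_le_mul hs hF (abs_nonneg _) zero_le_one
      have b2 : |Real.cos (ν*t)| * |GG ν R V t - GG ν R W t| ≤ 1 * (π * (2 * R * dist V W)) :=
        mul_le_mul hc hG (abs_nonneg _) zero_le_one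
      linarith
    calc |ε|/ν * |Real.sin (ν*t) * (FF ν R V t - FF ν R W t)
          - Real.cos (ν*t) * (GG ν R V t - GG ν R W t)|
        ≤ |ε|/ν * (2 * (π * (2 * R * dist V W))) := mul_le_mul_of_nonneg_left hb (by positivity)
      _ = |ε| * (4*π*R/ν) * dist V W := by ring
  linarith

lemma v2_continuous (ν : ℝ) (m : ℕ) (t₁ ε β R : ℝ) (V : CI) :
    Continuous (v2 ν m t₁ ε β R V) := by
  unfold v2
  have hc : Continuous fun t => Real.cos (ν*t) :=
    Real.continuous_cos.comp (continuous_const.mul continuous_id)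
  have hs : Continuous fun t => Real.sin (ν*t) :=
    Real.continuous_sin.comp (continuous_const.mul continuous_id)
  exact (((continuous_const.mul hc).sub (continuous_const.mul hs)).add
    (continuous_const.mul ((uu_continuous R V).pow 2))).add
    (continuous_const.mul ((hc.mul (GG_continuous ν R V)).sub (hs.mul (FF_continuous ν R V))))


set_option maxHeartbeats 1000000 in
theorem main_aux (ν : ℝ) (hν : 0 < ν) (hsπ : Real.sin (ν*π) = 0) (hcπ : Real.cos (ν*π) = 1)
    (m : ℕ) (hm : m ≠ 0) (K : ℝ) (hK : 0 < K) (t₁ : ℝ) (ht₁ : t₁ ∈ Icc (0:ℝ) π)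
    (hs₁ : Real.sin (ν*t₁) ≠ 0) :
    ∃ δ > 0, ∀ ε : ℝ, |ε| < δ →
      ∃ v : ℝ → ℝ, ContDiff ℝ 2 v ∧
        (∀ t ∈ Icc (0:ℝ) π, deriv (deriv v) t + ν^2 * v t = ε * (v t)^2) ∧
        v 0 = 1 + ε * (v t₁)^m ∧ v π = 1 + ε * K := by
  have hπ := Real.pi_pos
  obtain ⟨c, hc_def⟩ : ∃ x : ℝ, x = (K+1) ^ ((m:ℝ)⁻¹) := ⟨_, rfl⟩
  have hc0 : 0 ≤ c := hc_def ▸ Real.rpow_nonneg (by linarith) _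
  have hcm : c ^ m = K + 1 := by
    rw [hc_def]; exact Real.rpow_inv_natCast_pow (by linarith) hm
  obtain ⟨βa, hβa_def⟩ : ∃ x : ℝ, x = ν * (0 - Real.cos (ν*t₁)) / Real.sin (ν*t₁) := ⟨_, rfl⟩
  obtain ⟨βb, hβb_def⟩ : ∃ x : ℝ, x = ν * (c - Real.cos (ν*t₁)) / Real.sin (ν*t₁) := ⟨_, rfl⟩
  obtain ⟨Bm, hBm_def⟩ : ∃ x : ℝ, x = max |βa| |βb| := ⟨_, rfl⟩
  have hBm0 : 0 ≤ Bm := hBm_def ▸ le_trans (abs_nonneg βa) (le_max_left _ _)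
  have hβaB : |βa| ≤ Bm := hBm_def ▸ le_max_left _ _
  have hβbB : |βb| ≤ Bm := hBm_def ▸ le_max_right _ _
  obtain ⟨R, hR_def⟩ : ∃ x : ℝ, x = 3 + Bm / ν := ⟨_, rfl⟩
  have hR3 : 3 ≤ R := by
    have h : 0 ≤ Bm / ν := by positivity
    rw [hR_def]; linarith
  have hR0 : (0:ℝ) < R := by linarith
  obtain ⟨C₁, hC₁_def⟩ : ∃ x : ℝ, x = R^m + 2*π*R^2/ν := ⟨_, rfl⟩
  have hC₁0 : 0 < C₁ := by rw [hC₁_def]; positivity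
  obtain ⟨Cl, hCl_def⟩ : ∃ x : ℝ, x = m*R^(m-1) + 4*π*R/ν := ⟨_, rfl⟩
  have hCl0 : 0 < Cl := by rw [hCl_def]; positivity
  obtain ⟨Er, hEr_def⟩ : ∃ x : ℝ, x = m*R^(m-1)*C₁ + 2*R*π*C₁/ν := ⟨_, rfl⟩
  have hEr0 : 0 < Er := by rw [hEr_def]; positivity
  refine ⟨min (1/(2*(Cl+1))) (min (2/(C₁+1)) (min K 1/(Er+1))),
    lt_min (div_pos one_pos (by linarith)) (lt_min (div_pos two_pos (by linarith))
      (div_pos (lt_min hK one_pos) (by linarith))), ?_⟩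
  intro ε hε
  have hεCl : |ε| * Cl < 1/2 := by
    have h1 : |ε| < 1/(2*(Cl+1)) := lt_of_lt_of_le hε (min_le_left _ _)
    rw [lt_div_iff₀ (by linarith)] at h1
    nlinarith [abs_nonneg ε]
  have hεC₁ : |ε| * C₁ < 2 := by
    have h1 : |ε| < 2/(C₁+1) := lt_of_lt_of_le hε ((min_le_right _ _).trans (min_le_left _ _))
    rw [lt_div_iff₀ (by linarith)] at h1
    nlinarith [abs_nonneg ε]
  have hεEr : |ε| * Er < min K 1 := by
    have h1 : |ε| < min K 1/(Er+1) :=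
      lt_of_lt_of_le hε ((min_le_right _ _).trans (min_le_right _ _))
    have hm01 : 0 < min K 1 := lt_min hK one_pos
    rw [lt_div_iff₀ (by linarith)] at h1
    nlinarith [abs_nonneg ε]
  -- the contraction family
  have hcontr : ∀ β : ℝ, ContractingWith (1/2 : ℝ≥0) (Top ν m t₁ ε β R) := by
    intro β
    constructor
    · rw [← NNReal.coe_lt_coe]; push_cast; norm_num
    · apply LipschitzWith.of_dist_le_mul
      intro V W
      rw [ContinuousMap.dist_le (by positivity)]
      intro x
      rw [Real.dist_eq]
      calc |vRaw ν m t₁ ε β R V ↑x - vRaw ν m t₁ ε β R W ↑x|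
          ≤ |ε| * (m*R^(m-1) + 4*π*R/ν) * dist V W := vRaw_dist_le hν hR0.le m t₁ ε β V W x.2
        _ ≤ (1/2) * dist V W := by
            apply mul_le_mul_of_nonneg_right _ dist_nonneg
            rw [← hCl_def]; exact hεCl.le
        _ = ((1/2 : ℝ≥0) : ℝ) * dist V W := by push_cast; ring
  have hex : ∀ β : ℝ, ∃ W : CI, Function.IsFixedPt (Top ν m t₁ ε β R) W := fun β =>
    ⟨(hcontr β).fixedPoint, (hcontr β).fixedPoint_isFixedPt⟩
  choose Vb hfix using hex
  have hfix' : ∀ β (x : Icc (0:ℝ) π), Vb β x = vRaw ν m t₁ ε β R (Vb β) ↑x := by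
    intro β x
    conv_lhs => rw [← hfix β]
    rfl
  -- pointwise bound on fixed points
  have hVbound : ∀ β, |β| ≤ Bm → ∀ x : Icc (0:ℝ) π, |Vb β x| ≤ R := by
    intro β hβ x
    rw [hfix' β x]
    have hclose := vRaw_close hν hR0.le m t₁ ε β (Vb β) x.2
    rw [← hC₁_def] at hclose
    have hlin := linbound ν β hν ↑x
    have htri := abs_sub_abs_le_abs_sub (vRaw ν m t₁ ε β R (Vb β) ↑x)
      (Real.cos (ν*↑x) + (β/ν) * Real.sin (ν*↑x))
    have hβν : |β|/ν ≤ Bm/ν := by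
      rw [div_eq_mul_inv, div_eq_mul_inv]
      exact mul_le_mul_of_nonneg_right hβ (inv_nonneg.2 hν.le)
    linarith [hR_def.le, hR_def.ge]
  -- closeness to the linear solution
  have hVclose : ∀ β (x : Icc (0:ℝ) π),
      |Vb β x - (Real.cos (ν*↑x) + (β/ν) * Real.sin (ν*↑x))| ≤ |ε| * C₁ := by
    intro β x
    rw [hfix' β x, hC₁_def]
    exact vRaw_close hν hR0.le m t₁ ε β (Vb β) x.2
  -- Lipschitz dependence of the fixed point on β
  have hVdist : ∀ β β', dist (Vb β) (Vb β') ≤ 2 * (|β - β'|/ν) := by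
    intro β β'
    have hC : ∀ z : CI, dist (Top ν m t₁ ε β R z) (Top ν m t₁ ε β' R z) ≤ |β - β'|/ν := by
      intro z
      rw [ContinuousMap.dist_le (div_nonneg (abs_nonneg _) hν.le)]
      intro x
      rw [Real.dist_eq]
      have hdd : Top ν m t₁ ε β R z x - Top ν m t₁ ε β' R z x
          = ((β - β')/ν) * Real.sin (ν*↑x) := by
        show vRaw ν m t₁ ε β R z ↑x - vRaw ν m t₁ ε β' R z ↑x = _
        unfold vRaw
        ring
      rw [hdd, abs_mul, abs_div, abs_of_pos hν]
      calc |β - β'|/ν * |Real.sin (ν*↑x)| ≤ |β - β'|/ν * 1 :=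
          mul_le_mul_of_nonneg_left (Real.abs_sin_le_one _) (by positivity)
        _ = |β - β'|/ν := mul_one _
    have h := (hcontr β).dist_fixedPoint_fixedPoint_of_dist_le' (Top ν m t₁ ε β' R)
      (hfix β) (hfix β') hC
    have h12 : (1 - ((1/2 : ℝ≥0) : ℝ)) = 1/2 := by norm_num
    rw [h12] at h
    linarith [h, div_nonneg (abs_nonneg (β - β')) hν.le]
  -- the bifurcation function
  obtain ⟨H, hH_def⟩ : ∃ h : ℝ → ℝ,
      h = fun β => (uu R (Vb β) t₁)^m - K - GG ν R (Vb β) π / ν := ⟨_, rfl⟩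
  have hπmem : π ∈ Icc (0:ℝ) π := ⟨hπ.le, le_refl _⟩
  have hHlip : ∀ β β', |H β - H β'| ≤ ((m*R^(m-1) + 2*π*R/ν) * (2/ν)) * |β - β'| := by
    intro β β'
    have hd := hVdist β β'
    have h1 : |(uu R (Vb β) t₁)^m - (uu R (Vb β') t₁)^m|
        ≤ m*R^(m-1) * dist (Vb β) (Vb β') := by
      refine (abs_pow_sub_pow_le (abs_uu_le hR0.le _ t₁) (abs_uu_le hR0.le _ t₁) m).trans ?_
      exact mul_le_mul_of_nonneg_left (uu_dist_le R _ _ t₁) (by positivity)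
    have h2 : |GG ν R (Vb β) π - GG ν R (Vb β') π| ≤ π * (2*R*dist (Vb β) (Vb β')) :=
      GG_dist_le hR0.le ν _ _ hπmem
    have hdist0 : (0:ℝ) ≤ dist (Vb β) (Vb β') := dist_nonneg
    rw [hH_def]
    simp only
    have hstep : |(uu R (Vb β) t₁)^m - K - GG ν R (Vb β) π / ν
        - ((uu R (Vb β') t₁)^m - K - GG ν R (Vb β') π / ν)|
        ≤ |(uu R (Vb β) t₁)^m - (uu R (Vb β') t₁)^m|
          + |GG ν R (Vb β) π - GG ν R (Vb β') π| / ν := by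
      have h3 : (uu R (Vb β) t₁)^m - K - GG ν R (Vb β) π / ν
          - ((uu R (Vb β') t₁)^m - K - GG ν R (Vb β') π / ν)
          = ((uu R (Vb β) t₁)^m - (uu R (Vb β') t₁)^m)
            + -((GG ν R (Vb β) π - GG ν R (Vb β') π) / ν) := by ring
      rw [h3]
      refine (abs_add_le _ _).trans ?_
      rw [abs_neg, abs_div, abs_of_pos hν]
    refine hstep.trans ?_
    have h2' : |GG ν R (Vb β) π - GG ν R (Vb β') π| / ν ≤ π * (2*R*dist (Vb β) (Vb β')) / ν := by
      rw [div_eq_mul_inv, div_eq_mul_inv]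
      exact mul_le_mul_of_nonneg_right h2 (inv_nonneg.2 hν.le)
    have hmono : m*R^(m-1) * dist (Vb β) (Vb β') + π * (2*R*dist (Vb β) (Vb β')) / ν
        = (m*R^(m-1) + 2*π*R/ν) * dist (Vb β) (Vb β') := by ring
    have hfin : (m*R^(m-1) + 2*π*R/ν) * dist (Vb β) (Vb β')
        ≤ (m*R^(m-1) + 2*π*R/ν) * (2 * (|β - β'|/ν)) := by
      apply mul_le_mul_of_nonneg_left hd (by positivity)
    have heq2 : (m*R^(m-1) + 2*π*R/ν) * (2 * (|β - β'|/ν))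
        = ((m*R^(m-1) + 2*π*R/ν) * (2/ν)) * |β - β'| := by ring
    linarith
  have hHcont : Continuous H := by
    have hCH0 : 0 ≤ (m*R^(m-1) + 2*π*R/ν) * (2/ν) := by positivity
    apply LipschitzWith.continuous (K := Real.toNNReal ((m*R^(m-1) + 2*π*R/ν) * (2/ν)))
    apply LipschitzWith.of_dist_le_mul
    intro β β'
    rw [Real.dist_eq, Real.dist_eq, Real.coe_toNNReal _ hCH0]
    exact hHlip β β'
  -- comparison with the limit bifurcation function
  have hM : ∀ β, |β| ≤ Bm →
      |H β - ((Real.cos (ν*t₁) + (β/ν) * Real.sin (ν*t₁))^m - K)| ≤ |ε| * Er := by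
    intro β hβ
    have hW₀cont : Continuous fun t : Icc (0:ℝ) π =>
        Real.cos (ν*(t:ℝ)) + (β/ν) * Real.sin (ν*(t:ℝ)) := by
      apply Continuous.add
      · exact (Real.continuous_cos.comp (continuous_const.mul continuous_subtype_val))
      · exact continuous_const.mul
          (Real.continuous_sin.comp (continuous_const.mul continuous_subtype_val))
    set W₀ : CI := ⟨fun t => Real.cos (ν*(t:ℝ)) + (β/ν) * Real.sin (ν*(t:ℝ)), hW₀cont⟩ with hW₀_def
    have hWb : ∀ x : Icc (0:ℝ) π, |W₀ x| ≤ R := by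
      intro x
      refine (linbound ν β hν ↑x).trans ?_
      have hβν : |β|/ν ≤ Bm/ν := by
        rw [div_eq_mul_inv, div_eq_mul_inv]
        exact mul_le_mul_of_nonneg_right hβ (inv_nonneg.2 hν.le)
      rw [hR_def]; linarith
    have hdistW : dist (Vb β) W₀ ≤ |ε| * C₁ := by
      rw [ContinuousMap.dist_le (by positivity)]
      intro x
      rw [Real.dist_eq]
      exact hVclose β x
    -- first term
    have ht₁proj : projIcc 0 π pi_nonneg t₁ = ⟨t₁, ht₁⟩ := projIcc_of_mem pi_nonneg ht₁
    have huut₁ : uu R (Vb β) t₁ = Vb β ⟨t₁, ht₁⟩ := by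
      unfold uu
      rw [ht₁proj]
      exact cut_eq (hVbound β hβ _)
    have h1 : |uu R (Vb β) t₁ - (Real.cos (ν*t₁) + (β/ν) * Real.sin (ν*t₁))| ≤ |ε| * C₁ := by
      rw [huut₁]
      exact hVclose β ⟨t₁, ht₁⟩
    have habs1 : |Real.cos (ν*t₁) + (β/ν) * Real.sin (ν*t₁)| ≤ R := hWb ⟨t₁, ht₁⟩
    have h1' : |(uu R (Vb β) t₁)^m - (Real.cos (ν*t₁) + (β/ν) * Real.sin (ν*t₁))^m|
        ≤ m*R^(m-1) * (|ε| * C₁) := by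
      refine (abs_pow_sub_pow_le (abs_uu_le hR0.le _ t₁) habs1 m).trans ?_
      exact mul_le_mul_of_nonneg_left h1 (by positivity)
    -- second term
    have hGW₀ : GG ν R W₀ π = 0 := by
      have hcong : ∀ s ∈ uIcc (0:ℝ) π,
          Real.sin (ν*s) * (uu R W₀ s)^2
            = Real.sin (ν*s) * (Real.cos (ν*s) + (β/ν) * Real.sin (ν*s))^2 := by
        intro s hs
        rw [uIcc_of_le hπ.le] at hs
        have : uu R W₀ s = Real.cos (ν*s) + (β/ν) * Real.sin (ν*s) := by
          unfold uu
          rw [projIcc_of_mem pi_nonneg hs]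
          exact cut_eq (hWb _)
        rw [this]
      unfold GG
      rw [intervalIntegral.integral_congr hcong]
      exact key_integral_zero hν.ne' hsπ hcπ (β/ν)
    have h2 : |GG ν R (Vb β) π| ≤ π * (2*R*(|ε| * C₁)) := by
      have := GG_dist_le hR0.le ν (Vb β) W₀ hπmem
      rw [hGW₀] at this
      simp only [sub_zero] at this
      refine this.trans ?_
      have : π * (2*R*dist (Vb β) W₀) ≤ π * (2*R*(|ε| * C₁)) := by
        apply mul_le_mul_of_nonneg_left _ hπ.le
        apply mul_le_mul_of_nonneg_left hdistW (by positivity)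
      linarith [GG_dist_le hR0.le ν (Vb β) W₀ hπmem]
    -- combine
    rw [hH_def]
    simp only
    have hsplit : (uu R (Vb β) t₁)^m - K - GG ν R (Vb β) π / ν
        - ((Real.cos (ν*t₁) + (β/ν) * Real.sin (ν*t₁))^m - K)
        = ((uu R (Vb β) t₁)^m - (Real.cos (ν*t₁) + (β/ν) * Real.sin (ν*t₁))^m)
          + -(GG ν R (Vb β) π / ν) := by ring
    rw [hsplit]
    refine (abs_add_le _ _).trans ?_
    rw [abs_neg, abs_div, abs_of_pos hν]
    have h2' : |GG ν R (Vb β) π| / ν ≤ π * (2*R*(|ε| * C₁)) / ν := by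
      rw [div_eq_mul_inv, div_eq_mul_inv]
      exact mul_le_mul_of_nonneg_right h2 (inv_nonneg.2 hν.le)
    have : m*R^(m-1) * (|ε| * C₁) + π * (2*R*(|ε| * C₁)) / ν = |ε| * Er := by
      rw [hEr_def]; ring
    linarith
  -- values at the endpoints
  have hva : Real.cos (ν*t₁) + (βa/ν) * Real.sin (ν*t₁) = 0 := by
    rw [hβa_def]
    field_simp
    ring
  have hvb : Real.cos (ν*t₁) + (βb/ν) * Real.sin (ν*t₁) = c := by
    rw [hβb_def]
    field_simp
    ring
  have hHa : H βa < 0 := by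
    have h := hM βa hβaB
    rw [hva] at h
    rw [zero_pow hm] at h
    have habs := abs_lt.1 (lt_of_le_of_lt h hεEr)
    have := min_le_left K 1
    linarith [habs.2]
  have hHb : 0 < H βb := by
    have h := hM βb hβbB
    rw [hvb, hcm] at h
    have habs := abs_lt.1 (lt_of_le_of_lt h hεEr)
    have := min_le_right K 1
    linarith [habs.1]
  -- intermediate value theorem
  have h0mem : (0:ℝ) ∈ uIcc (H βa) (H βb) := by
    rw [Set.mem_uIcc]
    left
    exact ⟨hHa.le, hHb.le⟩
  obtain ⟨βh, hβh_mem, hβh0⟩ := intermediate_value_uIcc hHcont.continuousOn h0mem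
  have hβhB : |βh| ≤ Bm := by
    rcases Set.mem_uIcc.1 hβh_mem with h | h
    · exact abs_le.2 ⟨by linarith [neg_abs_le βa], by linarith [le_abs_self βb]⟩
    · exact abs_le.2 ⟨by linarith [neg_abs_le βb], by linarith [le_abs_self βa]⟩
  -- assemble the solution
  refine ⟨vRaw ν m t₁ ε βh R (Vb βh), ?_, ?_, ?_, ?_⟩
  · -- smoothness
    have hd1 := vRaw_hasDerivAt hν.ne' m t₁ ε βh R (Vb βh)
    have hd2 := v1_hasDerivAt hν.ne' m t₁ ε βh R (Vb βh)
    have hderiv1 : deriv (vRaw ν m t₁ ε βh R (Vb βh)) = v1 ν m t₁ ε βh R (Vb βh) :=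
      funext fun t => (hd1 t).deriv
    rw [show (2 : WithTop ℕ∞) = 1 + 1 from by norm_num, contDiff_succ_iff_deriv]
    refine ⟨fun t => (hd1 t).differentiableAt, by simp, ?_⟩
    rw [hderiv1, contDiff_one_iff_deriv]
    have hderiv2 : deriv (v1 ν m t₁ ε βh R (Vb βh)) = v2 ν m t₁ ε βh R (Vb βh) :=
      funext fun t => (hd2 t).deriv
    refine ⟨fun t => (hd2 t).differentiableAt, ?_⟩
    rw [hderiv2]
    exact v2_continuous ν m t₁ ε βh R (Vb βh)
  · -- ODE
    intro t htI
    have hd1 := vRaw_hasDerivAt hν.ne' m t₁ ε βh R (Vb βh)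
    have hd2 := v1_hasDerivAt hν.ne' m t₁ ε βh R (Vb βh)
    have hderiv1 : deriv (vRaw ν m t₁ ε βh R (Vb βh)) = v1 ν m t₁ ε βh R (Vb βh) :=
      funext fun s => (hd1 s).deriv
    rw [hderiv1, (hd2 t).deriv]
    have hid := ode_identity hν.ne' m t₁ ε βh R (Vb βh) t
    have huv : uu R (Vb βh) t = vRaw ν m t₁ ε βh R (Vb βh) t := by
      unfold uu
      rw [projIcc_of_mem pi_nonneg htI, cut_eq (hVbound βh hβhB _)]
      exact hfix' βh ⟨t, htI⟩
    rw [huv] at hid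
    exact hid
  · -- boundary condition at 0
    have h0I : (0:ℝ) ∈ Icc (0:ℝ) π := ⟨le_refl _, hπ.le⟩
    have huv : uu R (Vb βh) t₁ = vRaw ν m t₁ ε βh R (Vb βh) t₁ := by
      unfold uu
      rw [projIcc_of_mem pi_nonneg ht₁, cut_eq (hVbound βh hβhB _)]
      exact hfix' βh ⟨t₁, ht₁⟩
    have : vRaw ν m t₁ ε βh R (Vb βh) 0 = AA m t₁ ε R (Vb βh) := by
      unfold vRaw FF GG
      rw [mul_zero]
      simp [Real.cos_zero, Real.sin_zero, intervalIntegral.integral_same]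
    rw [this]
    unfold AA
    rw [huv]
  · -- boundary condition at π
    have hHh : (uu R (Vb βh) t₁)^m = K + GG ν R (Vb βh) π / ν := by
      have := hβh0
      rw [hH_def] at this
      simp only at this
      linarith [this]
    have hvπ : vRaw ν m t₁ ε βh R (Vb βh) π = AA m t₁ ε R (Vb βh)
        - (ε/ν) * GG ν R (Vb βh) π := by
      unfold vRaw
      rw [hsπ, hcπ]
      ring
    rw [hvπ]
    unfold AA
    rw [hHh]
    field_simp
    ring


end ResBVP
end

/-- For even positive `n`, `m > 2`, `K > 0`, and `t₁ ∈ [0,π]` with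
`sin(n t₁) ≠ 0`, the nonlocal boundary value problem `v'' + n² v = ε v²` on `(0,π)`,
`v(0) = 1 + ε v(t₁)^m`, `v(π) = 1 + ε K`, has a twice continuously differentiable
solution for all sufficiently small `ε`. -/
theorem example_resonant_bvp_solvable (n m : ℕ) (hn : 0 < n) (hneven : Even n)
    (hm : 2 < m) (K : ℝ) (hK : 0 < K) (t₁ : ℝ) (ht₁ : t₁ ∈ Icc (0 : ℝ) π)
    (hsin : Real.sin (n * t₁) ≠ 0) :
    ∃ δ > 0, ∀ ε : ℝ, |ε| < δ →
      ∃ v : ℝ → ℝ,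
        ContDiffOn ℝ 2 v (Icc 0 π) ∧
        (∀ t ∈ Ioo (0 : ℝ) π, deriv (deriv v) t + (n : ℝ) ^ 2 * v t = ε * (v t) ^ 2) ∧
        v 0 = 1 + ε * (v t₁) ^ m ∧
        v π = 1 + ε * K := by
  have hν : (0:ℝ) < n := by exact_mod_cast hn
  obtain ⟨k, hk⟩ := hneven
  have hsπ : Real.sin ((n:ℝ)*π) = 0 := Real.sin_nat_mul_pi n
  have hcπ : Real.cos ((n:ℝ)*π) = 1 := by
    have h : ((n:ℝ))*π = (k:ℝ) * (2*π) := by rw [hk]; push_cast; ring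
    rw [h]
    exact Real.cos_nat_mul_two_pi k
  have hm0 : m ≠ 0 := by omega
  obtain ⟨δ, hδ, hmain⟩ := ResBVP.main_aux (n:ℝ) hν hsπ hcπ m hm0 K hK t₁ ht₁ hsin
  refine ⟨δ, hδ, ?_⟩
  intro ε hε
  obtain ⟨v, hv2, hode, h0, hπb⟩ := hmain ε hε
  exact ⟨v, hv2.contDiffOn, fun t ht => hode t (Ioo_subset_Icc_self ht), h0, hπb⟩
end
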